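/- arXiv:2510.02430 — 8 statements merged into one kernel-verified Lean document; each statement's English description precedes it below -/
import Mathlib

section
/- Let N ∈ ℕ and let u be an (N+1)×(N+1) complex matrix with rows and columns indexed by {0,1,…,N}, and assume u₀₀ ≠ 0. For each n ∈ ℕ let α(n) = (1/n!) · per(Mₙ), where Mₙ is the (n+N)×(n+N) complex matrix obtained from u by repeating row 0 and column 0 exactly n times (i.e. Mₙ(i,j) = u(rₙ(i), rₙ(j)) where rₙ sends the first n indices to 0 and the remaining N indices to 1,…,N in order). Then there exists a polynomial P ∈ ℂ[X] with deg P ≤ N such that α(n) = (u₀₀)ⁿ · P(n) for every n ∈ ℕ. -/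
open scoped BigOperators

/-- The permanent of a square matrix. -/
noncomputable def perMatrix {ι : Type*} [Fintype ι] [DecidableEq ι] (M : Matrix ι ι ℂ) : ℂ :=
  ∑ σ : Equiv.Perm ι, ∏ i, M i (σ i)

/-- The reindexing map sending the first `n` indices of `Fin (n + N)` to `0 : Fin (N+1)`
and the remaining `N` indices to `1, …, N` in order. -/
def reindexMap (N n : ℕ) (i : Fin (n + N)) : Fin (N + 1) :=
  if h : (i : ℕ) < n then 0 else ⟨(i : ℕ) - n + 1, by have := i.isLt; omega⟩

namespace Thm1Aux

open Finset Equiv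

variable (N n : ℕ)

/-- Index of the `c`-th "ancilla" row/column inside `Fin (n + N)`. -/
def bidx (c : Fin N) : Fin (n + N) := ⟨n + (c : ℕ), by omega⟩

lemma bidx_injective : Function.Injective (bidx N n) := by
  intro a b h
  simpa [bidx, Fin.ext_iff] using h

lemma reindex_bidx (c : Fin N) : reindexMap N n (bidx N n c) = c.succ := by
  simp [reindexMap, bidx, Fin.ext_iff]

lemma reindex_of_lt {i : Fin (n + N)} (h : (i : ℕ) < n) : reindexMap N n i = 0 := by
  simp [reindexMap, h]

lemma reindex_of_not_lt {i : Fin (n + N)} (h : ¬ (i : ℕ) < n) :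
    reindexMap N n i = ⟨(i : ℕ) - n + 1, by have := i.isLt; omega⟩ := by
  simp [reindexMap, h]

/-- The pattern of a function `f : Fin N → Fin (n + N)` : for each `c`, `none` if `f c`
lies among the first `n` indices, otherwise `some b` where `f c = bidx b`. -/
def pat (f : Fin N → Fin (n + N)) (c : Fin N) : Option (Fin N) :=
  if _h : (f c : ℕ) < n then none
  else some ⟨(f c : ℕ) - n, by have := (f c).isLt; omega⟩

lemma pat_eq_none_iff {f : Fin N → Fin (n + N)} {c : Fin N} :
    pat N n f c = none ↔ (f c : ℕ) < n := by
  unfold pat; split <;> simp_all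

lemma pat_eq_some_iff {f : Fin N → Fin (n + N)} {c b : Fin N} :
    pat N n f c = some b ↔ f c = bidx N n b := by
  unfold pat; split <;> simp_all [Fin.ext_iff, bidx] <;> omega

/-- A pattern is valid if it is injective on its `some` part. -/
def valid (p : Fin N → Option (Fin N)) : Prop :=
  ∀ ⦃c c' b⦄, p c = some b → p c' = some b → c = c'

instance : DecidablePred (valid N) := fun p => by unfold valid; infer_instance

/-- Number of `c`'s with `p c = none`. -/
def kp (p : Fin N → Option (Fin N)) : ℕ := (univ.filter (fun c => p c = none)).card

lemma kp_le (p : Fin N → Option (Fin N)) : kp N p ≤ N := by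
  classical
  simpa [kp] using (Finset.card_filter_le univ (fun c => p c = none))

def ext (p : Fin N → Option (Fin N)) (c : Fin N) : Fin (N + 1) :=
  (p c).elim 0 Fin.succ

variable (u : Matrix (Fin (N + 1)) (Fin (N + 1)) ℂ)

def Apart (p : Fin N → Option (Fin N)) : ℂ := ∏ c : Fin N, u (ext N p c) c.succ

def Bpart (p : Fin N → Option (Fin N)) : ℂ :=
  ∏ b ∈ univ.filter (fun b : Fin N => ∀ c, p c ≠ some b), u b.succ 0

/-- Weight of a function `f`. -/
def w (f : Fin N → Fin (n + N)) : ℂ :=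
  (∏ c : Fin N, u (reindexMap N n (f c)) c.succ) *
    ∏ i ∈ (Finset.image f Finset.univ)ᶜ, u (reindexMap N n i) 0

lemma F_eq_w (σ : Equiv.Perm (Fin (n + N))) :
    (∏ i, u (reindexMap N n i) (reindexMap N n (σ i)))
      = w N n u (fun c => σ⁻¹ (bidx N n c)) := by
  classical
  set f : Fin N → Fin (n + N) := fun c => σ⁻¹ (bidx N n c) with hfdef
  have hinj : Function.Injective f := fun a b h =>
    bidx_injective N n (σ⁻¹.injective h)
  unfold w
  rw [← Finset.prod_mul_prod_compl (Finset.image f Finset.univ)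
      (fun i => u (reindexMap N n i) (reindexMap N n (σ i)))]
  congr 1
  · rw [Finset.prod_image (fun a _ b _ h => hinj h)]
    refine Finset.prod_congr rfl fun c _ => ?_
    have hσ : σ (f c) = bidx N n c := by simp [hfdef]
    rw [hσ, reindex_bidx]
  · refine Finset.prod_congr rfl fun i hi => ?_
    have hlt : ((σ i : Fin (n + N)) : ℕ) < n := by
      by_contra hge
      have hb : σ i = bidx N n ⟨((σ i : Fin (n + N)) : ℕ) - n, by
          have := (σ i).isLt; omega⟩ := by
        simp only [bidx, Fin.ext_iff]; omega
      have him : i ∈ Finset.image f Finset.univ := by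
        have hfi : f ⟨((σ i : Fin (n + N)) : ℕ) - n, by have := (σ i).isLt; omega⟩ = i := by
          show σ⁻¹ (bidx N n _) = i
          rw [← hb]; simp
        exact hfi ▸ Finset.mem_image_of_mem f (Finset.mem_univ _)
      exact (Finset.mem_compl.mp hi) him
    rw [reindex_of_lt N n hlt]

lemma pat_valid {f : Fin N → Fin (n + N)} (hf : Function.Injective f) :
    valid N (pat N n f) := by
  intro c c' b h h'
  rw [pat_eq_some_iff] at h h'
  exact hf (h.trans h'.symm)

lemma card_low_compl {f : Fin N → Fin (n + N)} (hf : Function.Injective f) :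
    (((Finset.image f Finset.univ)ᶜ).filter (fun i : Fin (n + N) => (i : ℕ) < n)).card
      = n - kp N (pat N n f) := by
  classical
  set Alow : Finset (Fin (n + N)) := univ.filter (fun i : Fin (n + N) => (i : ℕ) < n) with hA
  have h1 : ((Finset.image f Finset.univ)ᶜ).filter (fun i : Fin (n + N) => (i : ℕ) < n)
      = Alow \ Finset.image f Finset.univ := by
    ext i
    simp only [hA, Finset.mem_filter, Finset.mem_compl, Finset.mem_sdiff, Finset.mem_univ,
      true_and]
    tauto
  have h2 : Alow.card = n := by
    have : Alow = Finset.image (Fin.castAdd N) Finset.univ := by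
      ext i
      simp only [hA, Finset.mem_filter, Finset.mem_univ, true_and, Finset.mem_image]
      constructor
      · intro h; exact ⟨⟨(i : ℕ), h⟩, by simp [Fin.ext_iff]⟩
      · rintro ⟨j, rfl⟩; simp
    rw [this, Finset.card_image_of_injective _ (Fin.castAdd_injective _ _)]
    simp
  have h3 : Alow ∩ Finset.image f Finset.univ
      = Finset.image f (univ.filter (fun c => ((f c : Fin (n + N)) : ℕ) < n)) := by
    ext i
    simp only [hA, Finset.mem_inter, Finset.mem_filter, Finset.mem_univ, true_and,
      Finset.mem_image]
    constructor
    · rintro ⟨h, c, -, rfl⟩; exact ⟨c, h, rfl⟩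
    · rintro ⟨c, h, rfl⟩; exact ⟨h, c, by simp⟩
  have h4 : (Alow ∩ Finset.image f Finset.univ).card = kp N (pat N n f) := by
    rw [h3, Finset.card_image_of_injective _ hf]
    unfold kp
    congr 1
    ext c
    simp [pat_eq_none_iff]
  have h5 := Finset.card_sdiff_add_card_inter Alow (Finset.image f Finset.univ)
  rw [h1]
  omega

lemma compl_high_eq {f : Fin N → Fin (n + N)} :
    ((Finset.image f Finset.univ)ᶜ).filter (fun i : Fin (n + N) => ¬ (i : ℕ) < n)
      = Finset.image (bidx N n)
          (univ.filter (fun b : Fin N => ∀ c, pat N n f c ≠ some b)) := by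
  classical
  ext i
  simp only [Finset.mem_filter, Finset.mem_compl, Finset.mem_image, Finset.mem_univ, true_and,
    not_lt]
  constructor
  · rintro ⟨hni, hge⟩
    have hiN := i.isLt
    refine ⟨⟨(i : ℕ) - n, by omega⟩, fun c hc => ?_, by simp [bidx, Fin.ext_iff]; omega⟩
    rw [pat_eq_some_iff] at hc
    refine hni ⟨c, ?_⟩
    rw [hc]
    simp only [bidx, Fin.ext_iff]; omega
  · rintro ⟨b, hb, rfl⟩
    refine ⟨fun him => ?_, by simp [bidx]⟩
    obtain ⟨c, hc⟩ := him
    exact hb c ((pat_eq_some_iff N n).mpr hc)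

lemma w_eq {f : Fin N → Fin (n + N)} (hf : Function.Injective f) :
    w N n u f = Apart N u (pat N n f) * (u 0 0) ^ (n - kp N (pat N n f))
      * Bpart N u (pat N n f) := by
  classical
  unfold w Apart Bpart
  rw [mul_assoc]
  congr 1
  · refine Finset.prod_congr rfl fun c _ => ?_
    congr 1
    by_cases h : ((f c : Fin (n + N)) : ℕ) < n
    · rw [reindex_of_lt N n h]
      have hp : pat N n f c = none := (pat_eq_none_iff N n).mpr h
      simp [ext, hp]
    · rw [reindex_of_not_lt N n h]
      have hp : pat N n f c = some ⟨((f c : Fin (n + N)) : ℕ) - n, by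
          have := (f c).isLt; omega⟩ := by
        unfold pat; rw [dif_neg h]
      rw [ext, hp]
      simp [Fin.ext_iff, Fin.succ]
  · rw [← Finset.prod_filter_mul_prod_filter_not ((Finset.image f Finset.univ)ᶜ)
      (fun i : Fin (n + N) => (i : ℕ) < n)]
    congr 1
    · have hconst : ∀ i ∈ ((Finset.image f Finset.univ)ᶜ).filter
          (fun i : Fin (n + N) => (i : ℕ) < n), u (reindexMap N n i) 0 = u 0 0 := by
        intro i hi
        rw [reindex_of_lt N n (Finset.mem_filter.mp hi).2]
      rw [Finset.prod_congr rfl hconst, Finset.prod_const, card_low_compl N n hf]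
    · rw [compl_high_eq, Finset.prod_image (fun a _ b _ h => bidx_injective N n h)]
      refine Finset.prod_congr rfl fun b _ => ?_
      rw [reindex_bidx]

lemma card_subtype_lt : Fintype.card {i : Fin (n + N) // (i : ℕ) < n} = n := by
  have e : {i : Fin (n + N) // (i : ℕ) < n} ≃ Fin n :=
    ⟨fun i => ⟨i.1, i.2⟩, fun j => ⟨⟨(j : ℕ), by omega⟩, j.2⟩,
      fun i => rfl, fun j => rfl⟩
  rw [Fintype.card_congr e, Fintype.card_fin]

lemma card_Hfix :
    Fintype.card {τ : Equiv.Perm (Fin (n + N)) // ∀ c, τ (bidx N n c) = bidx N n c}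
      = n.factorial := by
  classical
  have e1 : {τ : Equiv.Perm (Fin (n + N)) // ∀ c, τ (bidx N n c) = bidx N n c}
      ≃ {τ : Equiv.Perm (Fin (n + N)) // ∀ i : Fin (n + N), ¬ ((i : ℕ) < n) → τ i = i} :=
    Equiv.subtypeEquivRight (fun τ => by
      constructor
      · intro h i hi
        have hb : i = bidx N n ⟨(i : ℕ) - n, by have := i.isLt; omega⟩ := by
          simp only [bidx, Fin.ext_iff]; omega
        rw [hb]; exact h _
      · intro h c
        exact h (bidx N n c) (by simp [bidx]))
  have e2 := (Equiv.Perm.subtypeEquivSubtypePerm (fun i : Fin (n + N) => (i : ℕ) < n)).symm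
  rw [Fintype.card_congr (e1.trans e2), Fintype.card_perm, card_subtype_lt]

lemma exists_rho {f : Fin N → Fin (n + N)} (hf : Function.Injective f) :
    ∃ ρ : Equiv.Perm (Fin (n + N)), ∀ c, ρ (bidx N n c) = f c := by
  classical
  let e1 : Fin N ≃ {i : Fin (n + N) // n ≤ (i : ℕ)} :=
    ⟨fun c => ⟨bidx N n c, by simp [bidx]⟩,
     fun i => ⟨(i : ℕ) - n, by have := i.1.isLt; omega⟩,
     fun c => by simp [bidx],
     fun i => by
       apply Subtype.ext
       have := i.2
       simp only [bidx, Fin.ext_iff]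
       omega⟩
  let e : {i : Fin (n + N) // n ≤ (i : ℕ)} ≃ {i : Fin (n + N) // i ∈ Set.range f} :=
    e1.symm.trans (Equiv.ofInjective f hf)
  refine ⟨Equiv.extendSubtype e, fun c => ?_⟩
  rw [Equiv.extendSubtype_apply_of_mem e _ (by simp [bidx] : n ≤ ((bidx N n c : Fin (n + N)) : ℕ))]
  have h1 : e1.symm ⟨bidx N n c, by simp [bidx]⟩ = c := by
    rw [Equiv.symm_apply_eq]
    rfl
  show ((Equiv.ofInjective f hf) (e1.symm ⟨bidx N n c, _⟩) : Fin (n + N)) = f c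
  rw [h1, Equiv.ofInjective_apply]

lemma card_fiber {f : Fin N → Fin (n + N)} (hf : Function.Injective f) :
    (Finset.univ.filter
        (fun σ : Equiv.Perm (Fin (n + N)) => (fun c => σ⁻¹ (bidx N n c)) = f)).card
      = n.factorial := by
  classical
  obtain ⟨ρ, hρ⟩ := exists_rho N n hf
  rw [← Fintype.card_subtype]
  have E : {σ : Equiv.Perm (Fin (n + N)) // (fun c => σ⁻¹ (bidx N n c)) = f}
      ≃ {τ : Equiv.Perm (Fin (n + N)) // ∀ c, τ (bidx N n c) = bidx N n c} := by
    refine ⟨fun σ => ⟨σ.1 * ρ, fun c => ?_⟩, fun τ => ⟨τ.1 * ρ⁻¹, ?_⟩, ?_, ?_⟩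
    · have h : σ.1⁻¹ (bidx N n c) = f c := congrFun σ.2 c
      have h2 : σ.1 (f c) = bidx N n c := by
        rw [← h]; exact Equiv.apply_symm_apply σ.1 _
      calc (σ.1 * ρ) (bidx N n c) = σ.1 (ρ (bidx N n c)) := rfl
        _ = σ.1 (f c) := by rw [hρ]
        _ = bidx N n c := h2
    · funext c
      have hinv : (τ.1 * ρ⁻¹)⁻¹ = ρ * τ.1⁻¹ := by rw [mul_inv_rev, inv_inv]
      have hτ : τ.1⁻¹ (bidx N n c) = bidx N n c := by
        have := τ.2 c
        exact (Equiv.symm_apply_eq τ.1).mpr this.symm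
      show (τ.1 * ρ⁻¹)⁻¹ (bidx N n c) = f c
      rw [hinv]
      calc (ρ * τ.1⁻¹) (bidx N n c) = ρ (τ.1⁻¹ (bidx N n c)) := rfl
        _ = ρ (bidx N n c) := by rw [hτ]
        _ = f c := hρ c
    · intro σ; exact Subtype.ext (mul_inv_cancel_right _ _)
    · intro τ; exact Subtype.ext (inv_mul_cancel_right _ _)
  rw [Fintype.card_congr E, card_Hfix]

/-- Glue an embedding into the low indices with the forced values on the `some` part. -/
def gfun (p : Fin N → Option (Fin N)) (e : {c : Fin N // p c = none} ↪ Fin n)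
    (c : Fin N) : Fin (n + N) :=
  if h : p c = none then ⟨((e ⟨c, h⟩ : Fin n) : ℕ), by have := (e ⟨c, h⟩).isLt; omega⟩
  else bidx N n ((p c).get (Option.ne_none_iff_isSome.mp h))

lemma gfun_of_none {p : Fin N → Option (Fin N)} (e : {c : Fin N // p c = none} ↪ Fin n)
    {c : Fin N} (h : p c = none) :
    gfun N n p e c = ⟨((e ⟨c, h⟩ : Fin n) : ℕ), by have := (e ⟨c, h⟩).isLt; omega⟩ := by
  rw [gfun, dif_pos h]

lemma gfun_of_some {p : Fin N → Option (Fin N)} (e : {c : Fin N // p c = none} ↪ Fin n)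
    {c b : Fin N} (h : p c = some b) : gfun N n p e c = bidx N n b := by
  rw [gfun, dif_neg (by simp [h])]
  congr 1
  simp [h]

lemma card_patfiber {p : Fin N → Option (Fin N)} (hp : valid N p) :
    (Finset.univ.filter
        (fun f : Fin N → Fin (n + N) => Function.Injective f ∧ pat N n f = p)).card
      = n.descFactorial (kp N p) := by
  classical
  rw [← Fintype.card_subtype]
  have hG : ∀ e : {c : Fin N // p c = none} ↪ Fin n,
      Function.Injective (gfun N n p e) ∧ pat N n (gfun N n p e) = p := by
    intro e
    constructor
    · intro c c' hcc
      rcases hc : p c with _ | b <;> rcases hc' : p c' with _ | b'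
      · rw [gfun_of_none N n e hc, gfun_of_none N n e hc'] at hcc
        have h1 : ((e ⟨c, hc⟩ : Fin n) : ℕ) = ((e ⟨c', hc'⟩ : Fin n) : ℕ) := by
          simpa using congrArg Fin.val hcc
        have : (⟨c, hc⟩ : {c : Fin N // p c = none}) = ⟨c', hc'⟩ :=
          e.injective (Fin.ext h1)
        exact congrArg Subtype.val this
      · rw [gfun_of_none N n e hc, gfun_of_some N n e hc'] at hcc
        have h1 := (e ⟨c, hc⟩).isLt
        have := congrArg Fin.val hcc
        simp only [bidx] at this
        omega
      · rw [gfun_of_some N n e hc, gfun_of_none N n e hc'] at hcc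
        have h1 := (e ⟨c', hc'⟩).isLt
        have := congrArg Fin.val hcc
        simp only [bidx] at this
        omega
      · rw [gfun_of_some N n e hc, gfun_of_some N n e hc'] at hcc
        have hbb : b = b' := bidx_injective N n hcc
        exact hp hc (by rw [hbb]; exact hc')
    · funext c
      rcases hc : p c with _ | b
      · rw [pat_eq_none_iff, gfun_of_none N n e hc]
        exact (e ⟨c, hc⟩).isLt
      · rw [pat_eq_some_iff]
        exact gfun_of_some N n e hc
  have E : {f : Fin N → Fin (n + N) // Function.Injective f ∧ pat N n f = p}
      ≃ ({c : Fin N // p c = none} ↪ Fin n) := by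
    refine ⟨fun f => ⟨fun c => ⟨((f.1 c.1 : Fin (n + N)) : ℕ), ?_⟩, ?_⟩,
      fun e => ⟨gfun N n p e, hG e⟩, ?_, ?_⟩
    · have h := congrFun f.2.2 c.1
      rw [c.2] at h
      exact (pat_eq_none_iff N n).mp h
    · intro a b hab
      apply Subtype.ext
      apply f.2.1
      exact Fin.ext (by simpa using congrArg Fin.val hab)
    · intro f
      apply Subtype.ext
      funext c
      dsimp only
      rcases hc : p c with _ | b
      · rw [gfun_of_none]
        · exact Fin.ext rfl
        · exact hc
      · rw [gfun_of_some N n _ hc]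
        have h := congrFun f.2.2 c
        rw [hc, pat_eq_some_iff] at h
        exact h.symm
    · intro e
      ext c
      simp only [Function.Embedding.coeFn_mk]
      show ((gfun N n p e c.1 : Fin (n + N)) : ℕ) = ((e c : Fin n) : ℕ)
      rw [gfun_of_none N n e c.2]
  rw [Fintype.card_congr E, Fintype.card_embedding_eq, Fintype.card_fin, Fintype.card_subtype]
  rfl

lemma key :
    perMatrix (fun i j : Fin (n + N) => u (reindexMap N n i) (reindexMap N n j))
      = (n.factorial : ℂ) * ∑ p ∈ univ.filter (valid N),
          (n.descFactorial (kp N p) : ℂ) *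
            (Apart N u p * (u 0 0) ^ (n - kp N p) * Bpart N u p) := by
  classical
  unfold perMatrix
  rw [← Finset.sum_fiberwise univ
      (fun σ : Equiv.Perm (Fin (n + N)) => fun c => σ⁻¹ (bidx N n c))
      (fun σ => ∏ i, u (reindexMap N n i) (reindexMap N n (σ i)))]
  have hfib : ∀ f : Fin N → Fin (n + N),
      (∑ σ ∈ univ.filter (fun σ : Equiv.Perm (Fin (n + N)) =>
          (fun c => σ⁻¹ (bidx N n c)) = f), ∏ i, u (reindexMap N n i) (reindexMap N n (σ i)))
        = (if Function.Injective f then (n.factorial : ℂ) else 0) * w N n u f := by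
    intro f
    by_cases hf : Function.Injective f
    · rw [if_pos hf]
      have hcongr : ∀ σ ∈ univ.filter (fun σ : Equiv.Perm (Fin (n + N)) =>
          (fun c => σ⁻¹ (bidx N n c)) = f),
          (∏ i, u (reindexMap N n i) (reindexMap N n (σ i))) = w N n u f := by
        intro σ hσ
        rw [F_eq_w N n u σ, (Finset.mem_filter.mp hσ).2]
      rw [Finset.sum_congr rfl hcongr, Finset.sum_const, card_fiber N n hf, nsmul_eq_mul]
    · rw [if_neg hf]
      have hempty : univ.filter (fun σ : Equiv.Perm (Fin (n + N)) =>
          (fun c => σ⁻¹ (bidx N n c)) = f) = ∅ := by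
        refine Finset.filter_eq_empty_iff.mpr ?_
        intro σ _ hq
        apply hf
        rw [← hq]
        exact fun a b hab => bidx_injective N n (σ⁻¹.injective hab)
      rw [hempty, Finset.sum_empty, zero_mul]
  rw [Finset.sum_congr rfl (fun f _ => hfib f)]
  have hstep2 : (∑ f : Fin N → Fin (n + N),
      (if Function.Injective f then (n.factorial : ℂ) else 0) * w N n u f)
      = ∑ f ∈ univ.filter (fun f : Fin N → Fin (n + N) => Function.Injective f),
          (n.factorial : ℂ) * w N n u f := by
    rw [Finset.sum_filter]
    exact Finset.sum_congr rfl fun f _ => by rw [ite_mul, zero_mul]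
  rw [hstep2, ← Finset.mul_sum]
  congr 1
  rw [← Finset.sum_fiberwise (univ.filter (fun f : Fin N → Fin (n + N) => Function.Injective f))
      (pat N n) (fun f => w N n u f)]
  rw [← Finset.sum_filter_add_sum_filter_not univ (valid N)
      (fun p => ∑ f ∈ (univ.filter (fun f : Fin N → Fin (n + N) =>
        Function.Injective f)).filter (fun f => pat N n f = p), w N n u f)]
  have hzero : ∀ p ∈ univ.filter (fun p : Fin N → Option (Fin N) => ¬ valid N p),
      (∑ f ∈ (univ.filter (fun f : Fin N → Fin (n + N) =>
        Function.Injective f)).filter (fun f => pat N n f = p), w N n u f) = 0 := by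
    intro p hp
    have hnv := (Finset.mem_filter.mp hp).2
    have hemp : ((univ.filter (fun f : Fin N → Fin (n + N) =>
        Function.Injective f)).filter (fun f => pat N n f = p)) = ∅ := by
      refine Finset.filter_eq_empty_iff.mpr ?_
      intro f hf hpf
      exact hnv (hpf ▸ pat_valid N n (Finset.mem_filter.mp hf).2)
    rw [hemp, Finset.sum_empty]
  rw [Finset.sum_eq_zero hzero, add_zero]
  refine Finset.sum_congr rfl fun p hp => ?_
  have hpv : valid N p := (Finset.mem_filter.mp hp).2
  have hcongr : ∀ f ∈ (univ.filter (fun f : Fin N → Fin (n + N) =>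
      Function.Injective f)).filter (fun f => pat N n f = p),
      w N n u f = Apart N u p * (u 0 0) ^ (n - kp N p) * Bpart N u p := by
    intro f hf
    obtain ⟨hfI, hfp⟩ := Finset.mem_filter.mp hf
    have hfi : Function.Injective f := (Finset.mem_filter.mp hfI).2
    rw [w_eq N n u hfi, hfp]
  rw [Finset.sum_congr rfl hcongr, Finset.sum_const, nsmul_eq_mul]
  congr 1
  rw [Finset.filter_filter, card_patfiber N n hpv]

end Thm1Aux

/-- Theorem 1 (measurement-induced non-linearities): the eigenvalues
`α(n) = (1/n!) · per(u[vₙ|vₙ])` equal `u₀₀ⁿ` times a polynomial of degree at most `N` in `n`. -/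
theorem stmt0 (N : ℕ) (u : Matrix (Fin (N + 1)) (Fin (N + 1)) ℂ) (hu : u 0 0 ≠ 0) :
    ∃ P : Polynomial ℂ, P.degree ≤ N ∧ ∀ n : ℕ,
      (1 / (n.factorial : ℂ)) *
          perMatrix (fun i j : Fin (n + N) => u (reindexMap N n i) (reindexMap N n j))
        = (u 0 0) ^ n * P.eval (n : ℂ) := by
  classical
  open Thm1Aux Finset Polynomial in
  refine ⟨∑ p ∈ univ.filter (valid N),
      Polynomial.C (Apart N u p * Bpart N u p * ((u 0 0)⁻¹) ^ (kp N p)) *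
        descPochhammer ℂ (kp N p), ?_, ?_⟩
  · refine (Polynomial.degree_sum_le _ _).trans ?_
    refine Finset.sup_le fun p _ => ?_
    refine (Polynomial.degree_mul_le _ _).trans ?_
    have h1 : (Polynomial.C (Apart N u p * Bpart N u p * ((u 0 0)⁻¹) ^ (kp N p))).degree ≤ 0 :=
      Polynomial.degree_C_le
    have h2 : (descPochhammer ℂ (kp N p)).degree ≤ (N : WithBot ℕ) := by
      refine (Polynomial.degree_le_natDegree).trans ?_
      rw [descPochhammer_natDegree]
      exact_mod_cast kp_le N p
    calc _ ≤ 0 + (N : WithBot ℕ) := add_le_add h1 h2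
    _ = (N : WithBot ℕ) := zero_add _
  · intro n
    rw [key N n u]
    have hfac : (n.factorial : ℂ) ≠ 0 := by
      exact_mod_cast n.factorial_ne_zero
    rw [← mul_assoc, one_div, inv_mul_cancel₀ hfac, one_mul, Polynomial.eval_finset_sum,
      Finset.mul_sum]
    refine Finset.sum_congr rfl fun p _ => ?_
    rw [Polynomial.eval_mul, Polynomial.eval_C, descPochhammer_eval_eq_descFactorial]
    by_cases hkn : kp N p ≤ n
    · have : (u 0 0) ^ (n - kp N p) = (u 0 0) ^ n * ((u 0 0) ^ (kp N p))⁻¹ := by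
        rw [pow_sub₀ _ hu hkn]
      rw [this]; ring
    · have : n.descFactorial (kp N p) = 0 := by
        rw [Nat.descFactorial_eq_zero_iff_lt]; omega
      rw [this]; push_cast; ring
end

section
/- Let n, M ∈ ℕ, let d : Fin M → ℕ satisfy d(p) ≤ n for all p, let W and V be M×M complex matrices, let E : Fin M → ℝ, and fix an index q₀ ∈ Fin M. For x ∈ ℝ let D(x) be the M×M diagonal matrix with diagonal entries e^{i·d(p)·x}, and define f(x) = Σ_{p} E(p) · |(W · D(x) · V)(p, q₀)|². Then there exist complex coefficients c_k for −n ≤ k ≤ n such that f(x) = Σ_{k=−n}^{n} c_k · e^{i k x} for all x ∈ ℝ. -/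
open scoped BigOperators

lemma absSq_eq_mul_conj (z : ℂ) : ((‖z‖ : ℂ)) ^ 2 = z * (starRingEnd ℂ) z := by
  rw [Complex.mul_conj]; norm_cast; rw [Complex.sq_norm]

/-- The bosonic cost landscape (Eq. 8 / Appendix B): varying a single phase shifter whose
occupations are at most `n` produces a trigonometric polynomial of degree at most `n`. -/
theorem stmt2 (n M : ℕ) (d : Fin M → ℕ) (hd : ∀ p, d p ≤ n)
    (W V : Matrix (Fin M) (Fin M) ℂ) (E : Fin M → ℝ) (q₀ : Fin M) :
    ∃ c : ℤ → ℂ, ∀ x : ℝ,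
      ((∑ p, E p *
          (‖((W * Matrix.diagonal
              (fun p : Fin M => Complex.exp (Complex.I * (d p : ℂ) * (x : ℂ))) * V) p q₀)‖) ^ 2
        : ℝ) : ℂ)
        = ∑ k ∈ Finset.Icc (-(n : ℤ)) (n : ℤ),
            c k * Complex.exp (Complex.I * (k : ℂ) * (x : ℂ)) := by
  classical
  refine ⟨fun k => ∑ p, ∑ r, ∑ s, if ((d r : ℤ) - (d s : ℤ) = k) then
      (E p : ℂ) * (W p r * V r q₀ * (starRingEnd ℂ) (W p s * V s q₀)) else 0, fun x => ?_⟩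
  have hA : ∀ p, (W * Matrix.diagonal
      (fun p : Fin M => Complex.exp (Complex.I * (d p : ℂ) * (x : ℂ))) * V) p q₀
      = ∑ r, W p r * Complex.exp (Complex.I * (d r : ℂ) * (x : ℂ)) * V r q₀ := by
    intro p
    rw [Matrix.mul_apply]
    congr 1; ext r
    rw [Matrix.mul_diagonal]
  push_cast
  calc (∑ p, (E p : ℂ) * (‖((W * Matrix.diagonal
          (fun p : Fin M => Complex.exp (Complex.I * (d p : ℂ) * (x : ℂ))) * V) p q₀)‖ : ℂ) ^ 2)
      = ∑ p, ∑ r, ∑ s, (E p : ℂ) * (W p r * V r q₀ * (starRingEnd ℂ) (W p s * V s q₀))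
          * Complex.exp (Complex.I * (((d r : ℤ) - (d s : ℤ) : ℤ) : ℂ) * (x : ℂ)) := by
        refine Finset.sum_congr rfl fun p _ => ?_
        rw [absSq_eq_mul_conj, hA p, map_sum, Finset.sum_mul_sum, Finset.mul_sum]
        refine Finset.sum_congr rfl fun r _ => ?_
        rw [Finset.mul_sum]
        apply Finset.sum_congr rfl
        intro s _
        have hc : (starRingEnd ℂ) (Complex.exp (Complex.I * (d s : ℂ) * (x : ℂ)))
            = Complex.exp (-(Complex.I * (d s : ℂ) * (x : ℂ))) := by
          rw [← Complex.exp_conj]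
          congr 1
          simp [Complex.conj_I]
        have he : Complex.exp (Complex.I * (d r : ℂ) * (x : ℂ))
            * Complex.exp (-(Complex.I * (d s : ℂ) * (x : ℂ)))
            = Complex.exp (Complex.I * (((d r : ℤ) - (d s : ℤ) : ℤ) : ℂ) * (x : ℂ)) := by
          rw [← Complex.exp_add]
          congr 1
          push_cast
          ring
        simp only [map_mul, hc]
        rw [← he]
        ring
    _ = ∑ k ∈ Finset.Icc (-(n : ℤ)) (n : ℤ),
          (∑ p, ∑ r, ∑ s, if ((d r : ℤ) - (d s : ℤ) = k) then
            (E p : ℂ) * (W p r * V r q₀ * (starRingEnd ℂ) (W p s * V s q₀)) else 0)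
          * Complex.exp (Complex.I * (k : ℂ) * (x : ℂ)) := by
        simp only [Finset.sum_mul, ite_mul, zero_mul]
        conv_rhs => rw [Finset.sum_comm]
        refine Finset.sum_congr rfl fun p _ => ?_
        conv_rhs => rw [Finset.sum_comm]
        refine Finset.sum_congr rfl fun r _ => ?_
        conv_rhs => rw [Finset.sum_comm]
        refine Finset.sum_congr rfl fun s _ => ?_
        rw [Finset.sum_ite_eq (Finset.Icc (-(n:ℤ)) (n:ℤ)) ((d r : ℤ) - (d s : ℤ))]
        have hm : ((d r : ℤ) - (d s : ℤ)) ∈ Finset.Icc (-(n:ℤ)) (n:ℤ) := by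
          simp only [Finset.mem_Icc]
          have := hd r; have := hd s; omega
        rw [if_pos hm]
end

section
/- Let M ∈ ℕ, let a, b ∈ ℝ, let d : Fin M → ℝ satisfy d(p) = a or d(p) = b for every p, let W and V be M×M complex matrices, let E : Fin M → ℝ, and fix an index q₀ ∈ Fin M. For x ∈ ℝ let D(x) be the M×M diagonal matrix with diagonal entries e^{i·d(p)·x}, and define f(x) = Σ_{p} E(p) · |(W · D(x) · V)(p, q₀)|². Then there exist A, B, φ ∈ ℝ such that f(x) = A·sin(|a−b|·x − φ) + B for all x ∈ ℝ. -/
open scoped BigOperators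
open Complex
lemma sinusoid (α β c ω : ℝ) : ∃ A B φ : ℝ, ∀ x : ℝ,
    α * Real.cos (ω*x) + β * Real.sin (ω*x) + c = A * Real.sin (ω*x - φ) + B := by
  refine ⟨‖(⟨β, -α⟩ : ℂ)‖, c, Complex.arg ⟨β, -α⟩, fun x => ?_⟩
  have h1 := Complex.norm_mul_cos_arg (⟨β, -α⟩ : ℂ)
  have h2 := Complex.norm_mul_sin_arg (⟨β, -α⟩ : ℂ)
  rw [Real.sin_sub]
  linear_combination (-(Real.sin (ω*x))) * h1 + Real.cos (ω*x) * h2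

lemma rot (θ : ℝ) (w : ℂ) :
    (Complex.exp ((θ:ℂ)*I) * w).re = w.re * Real.cos θ - w.im * Real.sin θ := by
  rw [Complex.exp_mul_I, ← Complex.ofReal_cos, ← Complex.ofReal_sin]
  simp only [add_mul, Complex.add_re, Complex.mul_re, Complex.mul_im,
    Complex.ofReal_re, Complex.ofReal_im, Complex.I_re, Complex.I_im]
  ring

lemma key (a b x : ℝ) (u v : ℂ) :
  (‖Complex.exp (Complex.I * a * x) * u + Complex.exp (Complex.I * b * x) * v‖)^2
  = (‖u‖)^2 + (‖v‖)^2
    + 2 * ((u * (starRingEnd ℂ) v).re * Real.cos ((a-b)*x)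
           - (u * (starRingEnd ℂ) v).im * Real.sin ((a-b)*x)) := by
  have h1 : Complex.I * a * x = ((a*x : ℝ) : ℂ) * I := by push_cast; ring
  have h2 : Complex.I * b * x = ((b*x : ℝ) : ℂ) * I := by push_cast; ring
  rw [h1, h2, Complex.sq_norm, Complex.normSq_add, Complex.sq_norm, Complex.sq_norm,
    Complex.normSq_mul, Complex.normSq_mul]
  have ha : ∀ θ : ℝ, Complex.normSq (Complex.exp ((θ:ℂ) * I)) = 1 := by
    intro θ
    rw [← Complex.sq_norm, Complex.norm_exp_ofReal_mul_I]; norm_num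
  rw [ha, ha, one_mul, one_mul]
  have hc : (Complex.exp ((↑(a*x):ℂ) * I) * u * (starRingEnd ℂ) (Complex.exp ((↑(b*x):ℂ) * I) * v)).re
      = (u * (starRingEnd ℂ) v).re * Real.cos ((a-b)*x) - (u * (starRingEnd ℂ) v).im * Real.sin ((a-b)*x) := by
    rw [map_mul, ← Complex.exp_conj]
    have e1 : (starRingEnd ℂ) ((↑(b*x):ℂ) * I) = (↑(-(b*x)):ℂ) * I := by
      simp [Complex.conj_I]
    have e2 : Complex.exp ((↑(a*x):ℂ) * I) * u * (Complex.exp ((↑(-(b*x)):ℂ) * I) * (starRingEnd ℂ) v)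
        = Complex.exp ((↑(a*x):ℂ) * I + (↑(-(b*x)):ℂ) * I) * (u * (starRingEnd ℂ) v) := by
      rw [Complex.exp_add]; ring
    have e3 : (↑(a*x):ℂ) * I + (↑(-(b*x)):ℂ) * I = (↑((a-b)*x):ℂ) * I := by
      push_cast; ring
    rw [e1, e2, e3, rot]
  rw [hc]


/-- The fermionic / dual-valued cost landscape (Eq. 11 / Appendix B): if the varied phase
shifter is dual-valued (eigenvalues `a` or `b`), the cost function is a single sinusoid
of frequency `|a − b|`. -/
theorem stmt3 (M : ℕ) (a b : ℝ) (d : Fin M → ℝ) (hd : ∀ p, d p = a ∨ d p = b)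
    (W V : Matrix (Fin M) (Fin M) ℂ) (E : Fin M → ℝ) (q₀ : Fin M) :
    ∃ A B φ : ℝ, ∀ x : ℝ,
      (∑ p, E p *
          (‖(W * Matrix.diagonal
              (fun p : Fin M => Complex.exp (Complex.I * (d p : ℂ) * (x : ℂ))) * V) p q₀‖) ^ 2)
        = A * Real.sin (|a - b| * x - φ) + B := by
  set u : Fin M → ℂ := fun p => ∑ k, if d k = a then W p k * V k q₀ else 0 with hu
  set v : Fin M → ℂ := fun p => ∑ k, if d k = a then 0 else W p k * V k q₀ with hv
  have entry : ∀ (p : Fin M) (x : ℝ),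
      (W * Matrix.diagonal (fun p : Fin M => Complex.exp (Complex.I * (d p : ℂ) * (x : ℂ))) * V) p q₀
      = Complex.exp (Complex.I * a * x) * u p + Complex.exp (Complex.I * b * x) * v p := by
    intro p x
    rw [Matrix.mul_apply, hu, hv, Finset.mul_sum, Finset.mul_sum, ← Finset.sum_add_distrib]
    apply Finset.sum_congr rfl
    intro j _
    rw [Matrix.mul_diagonal]
    by_cases hj : d j = a
    · simp only [hj, if_pos rfl, if_true, mul_zero, add_zero]; ring
    · have hb : d j = b := (hd j).resolve_left hj
      simp only [if_neg hj, mul_zero, zero_add]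
      rw [hb]; ring
  have inter : ∃ α β c : ℝ, ∀ x : ℝ,
      (∑ p, E p *
          (‖(W * Matrix.diagonal
              (fun p : Fin M => Complex.exp (Complex.I * (d p : ℂ) * (x : ℂ))) * V) p q₀‖) ^ 2)
        = α * Real.cos ((a-b)*x) + β * Real.sin ((a-b)*x) + c := by
    refine ⟨∑ p, 2 * E p * (u p * (starRingEnd ℂ) (v p)).re,
      ∑ p, -(2 * E p * (u p * (starRingEnd ℂ) (v p)).im),
      ∑ p, E p * ((‖u p‖)^2 + (‖v p‖)^2), fun x => ?_⟩
    rw [Finset.sum_mul, Finset.sum_mul, ← Finset.sum_add_distrib, ← Finset.sum_add_distrib]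
    apply Finset.sum_congr rfl
    intro p _
    rw [entry p x, key a b x (u p) (v p)]
    ring
  obtain ⟨α, β, c, hint⟩ := inter
  rcases le_or_gt 0 (a - b) with h0 | h0
  · obtain ⟨A, B, φ, hs⟩ := sinusoid α β c (a-b)
    refine ⟨A, B, φ, fun x => ?_⟩
    rw [_root_.abs_of_nonneg h0, hint x, hs x]
  · obtain ⟨A, B, φ, hs⟩ := sinusoid α (-β) c (-(a-b))
    refine ⟨A, B, φ, fun x => ?_⟩
    rw [_root_.abs_of_neg h0, hint x, ← hs x]
    rw [neg_mul, Real.cos_neg, neg_mul, Real.sin_neg]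
    ring
end

section
/- Let M ∈ ℕ, let Q and H be Hermitian M×M complex matrices, and let a, b ∈ ℝ satisfy (Q − a·I)(Q − b·I) = 0. Then for every vector ψ ∈ ℂ^M there exist A, B, φ ∈ ℝ such that for all x ∈ ℝ, the quantity ψ† · exp(i x Q)† · H · exp(i x Q) · ψ is real and equals A·sin(|a−b|·x − φ) + B, where exp denotes the matrix exponential. -/
open scoped BigOperators Matrix

lemma my_sinusoid (α β : ℝ) :
    ∃ A φ : ℝ, ∀ θ : ℝ, α * Real.cos θ + β * Real.sin θ = A * Real.sin (θ - φ) := by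
  by_cases h : α = 0 ∧ β = 0
  · exact ⟨0, 0, by simp [h.1, h.2]⟩
  · set z : ℂ := ⟨β, -α⟩ with hz
    have hz0 : z ≠ 0 := by
      intro hh
      rw [Complex.ext_iff] at hh
      simp only [hz, Complex.zero_re, Complex.zero_im] at hh
      exact h ⟨by linarith [hh.2], hh.1⟩
    have habs : ‖z‖ ≠ 0 := by simpa using hz0
    refine ⟨‖z‖, z.arg, fun θ => ?_⟩
    have hc : Real.cos z.arg = β / ‖z‖ := by rw [Complex.cos_arg hz0]
    have hs : Real.sin z.arg = -α / ‖z‖ := by rw [Complex.sin_arg]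
    rw [Real.sin_sub, hc, hs]
    field_simp
    ring

lemma my_herm_dot {m : Type*} [Fintype m] (K : Matrix m m ℂ) (ψ : m → ℂ) :
    (starRingEnd ℂ) (star ψ ⬝ᵥ (K *ᵥ ψ)) = star ψ ⬝ᵥ (Kᴴ *ᵥ ψ) := by
  have h1 : (starRingEnd ℂ) (star ψ ⬝ᵥ (K *ᵥ ψ)) = star (star ψ ⬝ᵥ (K *ᵥ ψ)) := rfl
  have h2 : star ψ ⬝ᵥ (K *ᵥ ψ) = star (star (K *ᵥ ψ) ⬝ᵥ ψ) := Matrix.star_dotProduct _ _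
  rw [h1, h2, star_star, Matrix.star_mulVec, ← Matrix.dotProduct_mulVec]

lemma my_exp_smul_one {m : Type*} [Fintype m] [DecidableEq m] (z : ℂ) :
    NormedSpace.exp (z • (1 : Matrix m m ℂ)) = Complex.exp z • 1 := by
  letI : SeminormedRing (Matrix m m ℂ) := Matrix.linftyOpSemiNormedRing
  letI : NormedRing (Matrix m m ℂ) := Matrix.linftyOpNormedRing
  letI : NormedAlgebra ℂ (Matrix m m ℂ) := Matrix.linftyOpNormedAlgebra
  have := (NormedSpace.algebraMap_exp_comm (𝔸 := Matrix m m ℂ) z).symm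
  simp only [Algebra.algebraMap_eq_smul_one, Complex.exp_eq_exp_ℂ] at this
  rw [Complex.exp_eq_exp_ℂ]
  exact this

set_option maxHeartbeats 1000000 in
lemma my_exp_quad {m : Type*} [Fintype m] [DecidableEq m]
    (S : Matrix m m ℂ) (μ : ℂ) (hμ : μ ≠ 0) (hS : S * S = μ • S) (c : ℂ) :
    NormedSpace.exp (c • S) = 1 + ((Complex.exp (c * μ) - 1) / μ) • S := by
  letI : SeminormedRing (Matrix m m ℂ) := Matrix.linftyOpSemiNormedRing
  letI : NormedRing (Matrix m m ℂ) := Matrix.linftyOpNormedRing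
  letI : NormedAlgebra ℂ (Matrix m m ℂ) := Matrix.linftyOpNormedAlgebra
  have hpow : ∀ n : ℕ, (c • S) ^ (n + 1) = (c ^ (n + 1) * μ ^ n) • S := by
    intro n
    induction n with
    | zero => simp
    | succ n ih =>
      rw [pow_succ, ih, Matrix.smul_mul, Matrix.mul_smul, hS, smul_smul, smul_smul]
      congr 1
      ring
  have hfull : Summable fun n : ℕ => (Nat.factorial n : ℂ)⁻¹ * (c * μ) ^ n := by
    simpa [smul_eq_mul] using NormedSpace.expSeries_summable' (𝕂 := ℂ) (c * μ)
  have hshift : Summable fun n : ℕ => ((Nat.factorial (n + 1) : ℂ)⁻¹) * (c * μ) ^ (n + 1) :=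
    (summable_nat_add_iff 1).mpr hfull
  have hgeq : ∀ n : ℕ, (Nat.factorial (n + 1) : ℂ)⁻¹ * (c ^ (n + 1) * μ ^ n)
      = μ⁻¹ * ((Nat.factorial (n + 1) : ℂ)⁻¹ * (c * μ) ^ (n + 1)) := by
    intro n
    linear_combination (-(Nat.factorial (n + 1) : ℂ)⁻¹ * c ^ (n + 1) * μ ^ n) * (inv_mul_cancel₀ hμ)
  have hg : Summable fun n : ℕ => (Nat.factorial (n + 1) : ℂ)⁻¹ * (c ^ (n + 1) * μ ^ n) := by
    simp_rw [hgeq]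
    exact hshift.mul_left _
  have hexpC : Complex.exp (c * μ) = ∑' n : ℕ, (Nat.factorial n : ℂ)⁻¹ * (c * μ) ^ n := by
    rw [Complex.exp_eq_exp_ℂ, NormedSpace.exp_eq_tsum ℂ]
    simp [smul_eq_mul]
  have hsum1 : ∑' n : ℕ, ((Nat.factorial (n + 1) : ℂ)⁻¹) * (c * μ) ^ (n + 1) = Complex.exp (c * μ) - 1 := by
    rw [hexpC, Summable.tsum_eq_zero_add hfull]
    simp
  simp only [NormedSpace.exp_eq_tsum ℂ]
  erw [Summable.tsum_eq_zero_add (NormedSpace.expSeries_summable' (𝕂 := ℂ) (c • S))]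
  simp only [pow_zero, Nat.factorial_zero, Nat.cast_one, inv_one, one_smul, hpow, smul_smul]
  rw [Summable.tsum_smul_const hg]
  congr 2
  rw [show (∑' n : ℕ, (Nat.factorial (n + 1) : ℂ)⁻¹ * (c ^ (n + 1) * μ ^ n)) = ∑' n : ℕ,
      μ⁻¹ * ((Nat.factorial (n + 1) : ℂ)⁻¹ * (c * μ) ^ (n + 1)) from tsum_congr hgeq,
    hshift.tsum_mul_left, hsum1]
  field_simp

open scoped ComplexOrder in
lemma my_herm_sq_zero {m : Type*} [Fintype m] (S : Matrix m m ℂ) (hh : Sᴴ = S)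
    (h2 : S * S = 0) : S = 0 := by
  apply Matrix.conjTranspose_mul_self_eq_zero.mp
  rw [hh, h2]

set_option maxHeartbeats 1000000 in
/-- Abstract dual-valued phase shifter result: if `Q` is Hermitian with exactly two eigenvalues
`a, b` (i.e. `(Q − aI)(Q − bI) = 0`), then for any Hermitian observable `H` and any state `ψ`,
the expectation value `ψ† e^{−ixQ} H e^{ixQ} ψ` is a real sinusoid of frequency `|a − b|`. -/
theorem stmt4 (M : ℕ) (Q H : Matrix (Fin M) (Fin M) ℂ)
    (hQ : Q.IsHermitian) (hH : H.IsHermitian) (a b : ℝ)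
    (hab : (Q - (a : ℂ) • (1 : Matrix (Fin M) (Fin M) ℂ)) *
        (Q - (b : ℂ) • (1 : Matrix (Fin M) (Fin M) ℂ)) = 0)
    (ψ : Fin M → ℂ) :
    ∃ A B φ : ℝ, ∀ x : ℝ,
      star ψ ⬝ᵥ (((NormedSpace.exp ((Complex.I * (x : ℂ)) • Q))ᴴ * H *
          NormedSpace.exp ((Complex.I * (x : ℂ)) • Q)) *ᵥ ψ)
        = ((A * Real.sin (|a - b| * x - φ) + B : ℝ) : ℂ) := by
  classical
  set S : Matrix (Fin M) (Fin M) ℂ := Q - (b : ℂ) • 1 with hSdef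
  set μr : ℝ := a - b with hμrdef
  have hS : S * S = ((μr : ℝ) : ℂ) • S := by
    have h1 : Q - (a : ℂ) • (1 : Matrix (Fin M) (Fin M) ℂ) = S - ((μr : ℝ) : ℂ) • 1 := by
      rw [hSdef, hμrdef]
      push_cast
      rw [sub_smul]
      abel
    rw [h1, Matrix.sub_mul, Matrix.smul_mul, Matrix.one_mul, sub_eq_zero] at hab
    exact hab
  have hSH : Sᴴ = S := by
    rw [hSdef]
    rw [Matrix.conjTranspose_sub, hQ.eq, Matrix.conjTranspose_smul, Matrix.conjTranspose_one]
    congr 1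
    simp [Complex.star_def, Complex.conj_ofReal]
  set z0 : ℂ := star ψ ⬝ᵥ (H *ᵥ ψ) with hz0def
  set z1 : ℂ := star ψ ⬝ᵥ ((H * S) *ᵥ ψ) with hz1def
  set z3 : ℂ := star ψ ⬝ᵥ ((S * H * S) *ᵥ ψ) with hz3def
  have hz0 : ((z0.re : ℝ) : ℂ) = z0 := by
    apply Complex.conj_eq_iff_re.mp
    rw [hz0def, my_herm_dot, hH.eq]
  have hz3 : ((z3.re : ℝ) : ℂ) = z3 := by
    apply Complex.conj_eq_iff_re.mp
    rw [hz3def, my_herm_dot]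
    congr 1
    rw [Matrix.conjTranspose_mul, Matrix.conjTranspose_mul, hSH, hH.eq, Matrix.mul_assoc]
  have hz13 : (starRingEnd ℂ) z1 = star ψ ⬝ᵥ ((S * H) *ᵥ ψ) := by
    rw [hz1def, my_herm_dot, Matrix.conjTranspose_mul, hSH, hH.eq]
  set p : ℝ := z1.re
  set q : ℝ := z1.im
  set r0 : ℝ := z0.re
  set r3 : ℝ := z3.re
  set ι : ℝ := μr⁻¹ with hι
  set s : ℝ := if 0 ≤ μr then (1 : ℝ) else -1 with hsdef
  obtain ⟨A, φ, hAφ⟩ := my_sinusoid (2 * p * ι - 2 * r3 * ι ^ 2) (s * (-2 * q * ι))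
  refine ⟨A, r0 - 2 * p * ι + 2 * r3 * ι ^ 2, φ, fun x => ?_⟩
  set c : ℂ := Complex.I * (x : ℂ) with hc
  set θ : ℝ := μr * x with hθ
  set k : ℂ := (Complex.exp (c * ((μr : ℝ) : ℂ)) - 1) / ((μr : ℝ) : ℂ) with hk
  -- the exponential
  have hexpS : NormedSpace.exp (c • S) = 1 + k • S := by
    by_cases hμ0 : μr = 0
    · have hS0 : S = 0 := by
        apply my_herm_sq_zero S hSH
        rw [hS, hμ0]
        simp
      rw [hS0, smul_zero, NormedSpace.exp_zero, smul_zero, add_zero]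
    · exact my_exp_quad S _ (by exact_mod_cast hμ0) hS c
  have hcomm : Commute ((c * (b : ℂ)) • (1 : Matrix (Fin M) (Fin M) ℂ)) (c • S) :=
    (Commute.one_left (c • S)).smul_left (c * (b : ℂ))
  have hQdec : c • Q = (c * (b : ℂ)) • (1 : Matrix (Fin M) (Fin M) ℂ) + c • S := by
    have hQ1 : Q = (b : ℂ) • (1 : Matrix (Fin M) (Fin M) ℂ) + S := by
      rw [hSdef]; abel
    rw [hQ1, smul_add, smul_smul]
  have hE : NormedSpace.exp (c • Q) = Complex.exp (c * (b : ℂ)) • (1 + k • S) := by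
    rw [hQdec, Matrix.exp_add_of_commute _ _ hcomm, my_exp_smul_one, hexpS,
      Matrix.smul_mul, Matrix.one_mul]
  have hw : (starRingEnd ℂ) (Complex.exp (c * (b : ℂ))) * Complex.exp (c * (b : ℂ)) = 1 := by
    rw [← Complex.exp_conj, ← Complex.exp_add]
    have h0 : (starRingEnd ℂ) (c * (b : ℂ)) + c * (b : ℂ) = 0 := by
      rw [hc]
      simp only [map_mul, Complex.conj_I, Complex.conj_ofReal]
      ring
    rw [h0, Complex.exp_zero]
  have hEH : (NormedSpace.exp (c • Q))ᴴ
      = (starRingEnd ℂ) (Complex.exp (c * (b : ℂ))) • (1 + (starRingEnd ℂ) k • S) := by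
    rw [hE, Matrix.conjTranspose_smul, Matrix.conjTranspose_add, Matrix.conjTranspose_one,
      Matrix.conjTranspose_smul, hSH]
    rfl
  set k' : ℂ := (starRingEnd ℂ) k with hk'
  have hEHE : (NormedSpace.exp (c • Q))ᴴ * H * NormedSpace.exp (c • Q)
      = H + k • (H * S) + k' • (S * H) + (k * k') • (S * H * S) := by
    rw [hEH, hE, Matrix.smul_mul, Matrix.smul_mul, Matrix.mul_smul, smul_smul, hw, one_smul]
    simp only [Matrix.add_mul, Matrix.mul_add, Matrix.smul_mul, Matrix.mul_smul,
      Matrix.one_mul, Matrix.mul_one, smul_add, smul_smul, Matrix.mul_assoc]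
    abel
  rw [hEHE, Matrix.add_mulVec, Matrix.add_mulVec, Matrix.add_mulVec,
    Matrix.smul_mulVec, Matrix.smul_mulVec, Matrix.smul_mulVec,
    dotProduct_add, dotProduct_add, dotProduct_add,
    dotProduct_smul, dotProduct_smul, dotProduct_smul,
    smul_eq_mul, smul_eq_mul, smul_eq_mul, ← hz0def, ← hz1def, ← hz3def, ← hz13, hk']
  -- now a complex-number computation
  have hkre : k.re = (Real.cos θ - 1) * ι := by
    rw [hk, Complex.div_ofReal_re, hι, div_eq_mul_inv]
    congr 1
    have hcm : c * ((μr : ℝ) : ℂ) = ((θ : ℝ) : ℂ) * Complex.I := by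
      rw [hc, hθ]; push_cast; ring
    rw [hcm, Complex.sub_re, Complex.exp_ofReal_mul_I_re, Complex.one_re]
  have hkim : k.im = Real.sin θ * ι := by
    rw [hk, Complex.div_ofReal_im, hι, div_eq_mul_inv]
    congr 1
    have hcm : c * ((μr : ℝ) : ℂ) = ((θ : ℝ) : ℂ) * Complex.I := by
      rw [hc, hθ]; push_cast; ring
    rw [hcm, Complex.sub_im, Complex.exp_ofReal_mul_I_im, Complex.one_im, sub_zero]
  have hval : r0 + 2 * (k * z1).re + Complex.normSq k * r3
      = A * Real.sin (|a - b| * x - φ)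
        + (r0 - 2 * p * ι + 2 * r3 * ι ^ 2) := by
    rw [← hAφ (|a - b| * x)]
    rw [Complex.mul_re, Complex.normSq_apply, hkre, hkim]
    rcases le_or_gt 0 μr with hle | hlt
    · have habs : |a - b| = μr := by rw [← hμrdef]; exact abs_of_nonneg hle
      have hs1 : s = 1 := if_pos hle
      rw [habs, ← hθ, hs1]
      linear_combination (r3 * ι ^ 2) * (Real.sin_sq_add_cos_sq θ)
    · have habs : |a - b| = -μr := by rw [← hμrdef]; exact abs_of_neg hlt
      have hs1 : s = -1 := if_neg (not_le.mpr hlt)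
      have hneg : |a - b| * x = -θ := by rw [habs, hθ]; ring
      rw [hneg, Real.cos_neg, Real.sin_neg, hs1]
      linear_combination (r3 * ι ^ 2) * (Real.sin_sq_add_cos_sq θ)
  calc z0 + k * z1 + (starRingEnd ℂ) k * (starRingEnd ℂ) z1 + k * (starRingEnd ℂ) k * z3
      = ((r0 : ℝ) : ℂ) + (k * z1 + (starRingEnd ℂ) (k * z1))
        + ((Complex.normSq k : ℝ) : ℂ) * ((r3 : ℝ) : ℂ) := by
        rw [hz0, hz3, map_mul]
        rw [Complex.mul_conj]
        ring
    _ = ((r0 + 2 * (k * z1).re + Complex.normSq k * r3 : ℝ) : ℂ) := by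
        rw [Complex.add_conj]
        push_cast
        ring
    _ = ((A * Real.sin (|a - b| * x - φ) + (r0 - 2 * p * ι + 2 * r3 * ι ^ 2) : ℝ) : ℂ) := by
        rw [hval]
end

section
/- Let n ≥ 1 and let f : ℝ → ℝ be given by f(x) = Σ_{k=−n}^{n} c_k e^{i k x} with complex coefficients satisfying c_{−k} = conj(c_k) for all k. Then f is differentiable and for all x ∈ ℝ, f'(x) = Σ_{k=1}^{2n} f(x + x_k) · (−1)^{k+1} / (4n · sin²(x_k/2)), where x_k = (2k−1)π/(2n). -/
open scoped BigOperators

open Complex Finset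
open scoped Real

private lemma aux_poly (z c : ℂ) (N : ℕ) :
    (z - 1)^2 * ∑ j ∈ Finset.range N, (c - j) * z^j
      = (z^N - 1) - (c+1)*(z-1) + (c - N + 1)*(z^(N+1) - z^N) := by
  induction N with
  | zero => simp
  | succ N ih =>
    rw [Finset.sum_range_succ, mul_add, ih]
    push_cast
    ring

private lemma aux_sum (n : ℕ) (hn : 1 ≤ n) (z : ℂ) (hz : z ^ (2*n) = -1) :
    (∑ m ∈ Finset.Icc (1 - (n:ℤ)) (n:ℤ), (m:ℂ) * z ^ (-m)) * (z-1)^2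
      = -2 * z ^ (1-(n:ℤ)) := by
  have hz0 : z ≠ 0 := by
    intro h; rw [h, zero_pow (by omega)] at hz; exact absurd hz (by norm_num)
  have hmap : Finset.Icc (1 - (n:ℤ)) (n:ℤ)
      = (Finset.range (2*n)).map ⟨fun j : ℕ => (n:ℤ) - j, show Function.Injective (fun j : ℕ => (n:ℤ) - j) from fun a b h => by simpa using h⟩ := by
    ext m
    simp only [Finset.mem_Icc, Finset.mem_map, Finset.mem_range, Function.Embedding.coeFn_mk]
    constructor
    · intro ⟨h1, h2⟩; exact ⟨(n - m).toNat, by omega, by omega⟩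
    · rintro ⟨j, hj, rfl⟩; omega
  rw [hmap, Finset.sum_map]
  simp only [Function.Embedding.coeFn_mk]
  have hterm : ∀ j : ℕ, ((((n:ℤ) - j : ℤ)):ℂ) * z ^ (-((n:ℤ) - j))
      = z ^ (-(n:ℤ)) * (((n:ℂ) - j) * z ^ j) := by
    intro j
    rw [neg_sub, zpow_sub₀ hz0, zpow_natCast]
    push_cast
    field_simp [zpow_ne_zero]
    simp [zpow_neg, hz0]
  rw [Finset.sum_congr rfl fun j _ => hterm j, ← Finset.mul_sum]
  have := aux_poly z n (2*n)
  have key : (z-1)^2 * ∑ j ∈ Finset.range (2*n), ((n:ℂ) - j) * z^j = -2*z := by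
    rw [this, hz, pow_succ, hz]
    push_cast
    ring
  have h1n : z ^ (1-(n:ℤ)) = z * z ^ (-(n:ℤ)) := by
    rw [zpow_sub₀ hz0, zpow_one, zpow_neg, zpow_natCast]
    ring
  calc z ^ (-(n:ℤ)) * (∑ j ∈ Finset.range (2*n), ((n:ℂ) - j) * z^j) * (z-1)^2
      = z ^ (-(n:ℤ)) * ((z-1)^2 * ∑ j ∈ Finset.range (2*n), ((n:ℂ) - j) * z^j) := by ring
    _ = z ^ (-(n:ℤ)) * (-2*z) := by rw [key]
    _ = -2 * z ^ (1-(n:ℤ)) := by rw [h1n]; ring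

private lemma sin_sq_rel (θ : ℝ) :
    ((Real.sin (θ/2) : ℂ))^2 * (4 * Complex.exp (I*θ)) = -(Complex.exp (I*θ) - 1)^2 := by
  have h2 : Complex.exp (I*θ) = Complex.exp ((θ/2 : ℂ)*I) * Complex.exp ((θ/2 : ℂ)*I) := by
    rw [← Complex.exp_add]; push_cast; ring_nf
  have hs : (Real.sin (θ/2) : ℂ)
      = (Complex.exp (-(θ/2 : ℂ) * I) - Complex.exp ((θ/2 : ℂ) * I)) * I / 2 := by
    rw [Complex.ofReal_sin]; push_cast; rw [Complex.sin]
  have he : Complex.exp ((θ/2 : ℂ)*I) ≠ 0 := Complex.exp_ne_zero _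
  have hneg : Complex.exp (-(θ/2 : ℂ) * I) = (Complex.exp ((θ/2 : ℂ)*I))⁻¹ := by
    rw [← Complex.exp_neg]; ring_nf
  rw [hs, hneg, h2]
  have hI : (I:ℂ)^2 = -1 := Complex.I_sq
  field_simp
  ring_nf
  rw [Complex.I_sq]
  ring

private lemma orth (n : ℕ) (hn : 1 ≤ n) (d : ℤ) (h1 : -(2*(n:ℤ)) < d) (h2 : d < 2*n) (hd : d ≠ 0) :
    ∑ μ ∈ Finset.Icc 1 (2*n),
      (Complex.exp (I * (((2*(μ:ℝ)-1)*Real.pi/(2*n) : ℝ) : ℂ))) ^ d = 0 := by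
  have hn0 : (n:ℝ) ≠ 0 := by positivity
  set q : ℂ := Complex.exp (I * (d * Real.pi / n)) with hq
  have hmap : Finset.Icc 1 (2*n) = (Finset.range (2*n)).map ⟨fun j : ℕ => j + 1, show Function.Injective (fun j : ℕ => j + 1) from fun a b h => by simpa using h⟩ := by
    ext m
    simp only [Finset.mem_Icc, Finset.mem_map, Finset.mem_range, Function.Embedding.coeFn_mk]
    constructor
    · intro ⟨ha, hb⟩; exact ⟨m - 1, by omega, by omega⟩
    · rintro ⟨j, hj, rfl⟩; omega
  have hterm : ∀ j : ℕ, (Complex.exp (I * (((2*((j+1:ℕ):ℝ)-1)*Real.pi/(2*n) : ℝ) : ℂ))) ^ d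
      = Complex.exp (I * (d * Real.pi / (2*n))) * q ^ j := by
    intro j
    rw [← Complex.exp_int_mul, hq, ← Complex.exp_nat_mul, ← Complex.exp_add]
    congr 1
    push_cast
    field_simp
    ring
  rw [hmap, Finset.sum_map]
  simp only [Function.Embedding.coeFn_mk]
  rw [Finset.sum_congr rfl fun j _ => hterm j, ← Finset.mul_sum]
  have hq1 : q ≠ 1 := by
    intro h
    rw [hq, Complex.exp_eq_one_iff] at h
    obtain ⟨k, hk⟩ := h
    have hπ : (Real.pi : ℂ) ≠ 0 := by exact_mod_cast Real.pi_ne_zero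
    have hI : (I:ℂ) ≠ 0 := Complex.I_ne_zero
    have hnc : ((n:ℂ)) ≠ 0 := by exact_mod_cast (by positivity : (0:ℝ) < n).ne'
    have : (d:ℂ) = 2 * n * k := by
      field_simp at hk
      have hπI : (Real.pi : ℂ) * I ≠ 0 := mul_ne_zero hπ hI
      have h' : (d:ℂ) * ((Real.pi:ℂ) * I) = ((2*n*k : ℂ)) * ((Real.pi:ℂ) * I) := by
        push_cast; linear_combination hk * ((Real.pi:ℂ) * I)
      exact mul_right_cancel₀ hπI h'
    have hd' : d = 2 * n * k := by exact_mod_cast this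
    rcases lt_trichotomy k 0 with h | h | h
    · nlinarith [Int.le_sub_one_of_lt h]
    · rw [h] at hd'; simp at hd'; exact hd hd'
    · nlinarith [Int.add_one_le_of_lt h]
  rw [geom_sum_eq hq1]
  have hq2n : q ^ (2*n) = 1 := by
    rw [hq, ← Complex.exp_nat_mul]
    have : ((2*n : ℕ):ℂ) * (I * (d * Real.pi / n)) = (d:ℂ) * (2 * Real.pi * I) := by
      have hnc : ((n:ℂ)) ≠ 0 := by exact_mod_cast (by positivity : (0:ℝ) < n).ne'
      push_cast
      field_simp
    rw [this, Complex.exp_int_mul_two_pi_mul_I]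
  rw [hq2n]
  simp

private lemma exp2n (n μ : ℕ) (hn : 1 ≤ n) (hμ1 : 1 ≤ μ) (hμ2 : μ ≤ 2*n) :
    (Complex.exp (I * (((2*(μ:ℝ)-1)*Real.pi/(2*n) : ℝ) : ℂ))) ^ (2*n) = -1 := by
  have hn0 : (0:ℝ) < n := by exact_mod_cast hn
  have hkC : ((2*μ-1:ℕ):ℂ) = 2*(μ:ℂ)-1 := by
    push_cast [Nat.cast_sub (show 1 ≤ 2*μ by omega)]; ring
  rw [← Complex.exp_nat_mul]
  have harg : ((2*n:ℕ):ℂ) * (I * (((2*(μ:ℝ)-1)*Real.pi/(2*n) : ℝ):ℂ))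
      = ((2*μ-1:ℕ):ℂ) * ((Real.pi:ℂ) * I) := by
    rw [hkC]
    have : ((n:ℂ)) ≠ 0 := by exact_mod_cast hn0.ne'
    push_cast
    field_simp
  rw [harg, Complex.exp_nat_mul, Complex.exp_pi_mul_I]
  exact Odd.neg_one_pow ⟨μ-1, by omega⟩

private lemma coeff_eq (n μ : ℕ) (hn : 1 ≤ n) (hμ1 : 1 ≤ μ) (hμ2 : μ ≤ 2*n) :
    (((-1:ℝ)^(μ+1) / (4*n*Real.sin ((2*(μ:ℝ)-1)*Real.pi/(2*n)/2)^2) : ℝ) : ℂ)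
      = (2*(n:ℂ))⁻¹ * ∑ m ∈ Finset.Icc (1-(n:ℤ)) (n:ℤ),
          I * m * Complex.exp (I * (((2*(μ:ℝ)-1)*Real.pi/(2*n):ℝ):ℂ)) ^ (-m) := by
  have hπ := Real.pi_pos
  have hn0 : (0:ℝ) < n := by exact_mod_cast hn
  have hμ1' : (1:ℝ) ≤ (μ:ℝ) := by exact_mod_cast hμ1
  have hμ2' : (μ:ℝ) ≤ 2*n := by exact_mod_cast hμ2
  set θ : ℝ := (2*(μ:ℝ)-1)*Real.pi/(2*n) with hθ
  set z : ℂ := Complex.exp (I * (θ:ℂ)) with hzdef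
  have hz0 : z ≠ 0 := Complex.exp_ne_zero _
  have hkC : ((2*μ-1:ℕ):ℂ) = 2*(μ:ℂ)-1 := by
    push_cast [Nat.cast_sub (show 1 ≤ 2*μ by omega)]; ring
  have hz2n : z ^ (2*n) = -1 := by
    rw [hzdef, ← Complex.exp_nat_mul]
    have harg : ((2*n:ℕ):ℂ) * (I * (θ:ℂ)) = ((2*μ-1:ℕ):ℂ) * ((Real.pi:ℂ) * I) := by
      rw [hkC, hθ]
      have : ((n:ℂ)) ≠ 0 := by exact_mod_cast hn0.ne'
      push_cast
      field_simp
    rw [harg, Complex.exp_nat_mul, Complex.exp_pi_mul_I]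
    exact Odd.neg_one_pow ⟨μ-1, by omega⟩
  have hzn : z ^ n = (-1:ℂ)^(μ+1) * I := by
    rw [hzdef, ← Complex.exp_nat_mul]
    have harg : ((n:ℕ):ℂ) * (I * (θ:ℂ)) = ((2*μ-1:ℕ):ℂ) * (((Real.pi:ℂ)/2) * I) := by
      rw [hkC, hθ]
      have : ((n:ℂ)) ≠ 0 := by exact_mod_cast hn0.ne'
      push_cast
      field_simp
    have hI : Complex.exp (((Real.pi:ℂ)/2) * I) = I := by
      rw [Complex.exp_mul_I, Complex.cos_pi_div_two, Complex.sin_pi_div_two]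
      ring
    rw [harg, Complex.exp_nat_mul, hI]
    have h1 : 2*μ-1 = 2*(μ-1)+1 := by omega
    rw [h1, pow_succ, pow_mul, Complex.I_sq]
    have h2 : μ+1 = (μ-1)+2 := by omega
    rw [h2, pow_add]
    ring
  have hz1 : z ≠ 1 := by
    intro h
    rw [h, one_pow] at hz2n
    norm_num at hz2n
  have hzm1 : (z - 1) ≠ 0 := sub_ne_zero.mpr hz1
  have hsin0 : Real.sin (θ/2) ≠ 0 := by
    apply ne_of_gt
    apply Real.sin_pos_of_pos_of_lt_pi
    · apply div_pos _ two_pos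
      apply div_pos _ (by linarith : (0:ℝ) < 2*n)
      nlinarith
    · rw [div_lt_iff₀ two_pos, hθ, div_lt_iff₀ (by linarith : (0:ℝ) < 2*n)]
      nlinarith
  have hrel : (z - 1)^2 = -(4 * ((Real.sin (θ/2) : ℂ))^2 * z) := by
    have := sin_sq_rel θ
    rw [← hzdef] at this
    linear_combination this
  have hsum := aux_sum n hn z hz2n
  have hdiv : (∑ m ∈ Finset.Icc (1 - (n:ℤ)) (n:ℤ), (m:ℂ) * z ^ (-m))
      = -2 * z ^ (1-(n:ℤ)) / (z-1)^2 := by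
    rw [eq_div_iff (pow_ne_zero 2 hzm1)]
    exact hsum
  have hz1n : z ^ (1-(n:ℤ)) = z * ((-1:ℂ)^(μ+1) * I)⁻¹ := by
    rw [sub_eq_add_neg, zpow_add₀ hz0, zpow_one, zpow_neg, zpow_natCast, hzn]
  calc (((-1:ℝ)^(μ+1) / (4*n*Real.sin ((2*(μ:ℝ)-1)*Real.pi/(2*n)/2)^2) : ℝ) : ℂ)
      = ((-1:ℂ)^(μ+1)) / (4*(n:ℂ)*((Real.sin (θ/2) : ℂ))^2) := by
        rw [hθ]
        push_cast
        ring
    _ = (2*(n:ℂ))⁻¹ * (I * (-2 * z ^ (1-(n:ℤ)) / (z-1)^2)) := by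
        rw [hz1n, hrel]
        have hs : ((Real.sin (θ/2) : ℂ)) ≠ 0 := by exact_mod_cast hsin0
        have hnc : ((n:ℂ)) ≠ 0 := by exact_mod_cast hn0.ne'
        generalize hSdef : ((Real.sin (θ/2) : ℝ) : ℂ) = S at hs ⊢
        generalize hwdef : ((-1:ℂ)^(μ+1)) = w
        generalize hzd : z = y at hz0
        have hw : w ≠ 0 := by rw [← hwdef]; apply pow_ne_zero; norm_num
        have hw2 : w^2 = 1 := by rw [← hwdef, ← pow_mul, mul_comm, pow_mul]; norm_num
        have hI2 : (I:ℂ)^2 = -1 := Complex.I_sq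
        field_simp [hw, Complex.I_ne_zero, hz0, hs, hnc]
        ring_nf
        have hwinv : w⁻¹ = w := inv_eq_of_mul_eq_one_right (by rw [← sq]; exact hw2)
        exact hw2
    _ = (2*(n:ℂ))⁻¹ * ∑ m ∈ Finset.Icc (1-(n:ℤ)) (n:ℤ),
          I * m * Complex.exp (I * (((2*(μ:ℝ)-1)*Real.pi/(2*n):ℝ):ℂ)) ^ (-m) := by
        congr 1
        rw [show (∑ m ∈ Finset.Icc (1-(n:ℤ)) (n:ℤ), I * m * z ^ (-m))
            = I * ∑ m ∈ Finset.Icc (1-(n:ℤ)) (n:ℤ), (m:ℂ) * z ^ (-m) by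
          rw [Finset.mul_sum]; exact Finset.sum_congr rfl fun m _ => by ring]
        rw [hdiv]

private lemma key_s5 (n : ℕ) (hn : 1 ≤ n) (m : ℤ) (hm1 : -(n:ℤ) ≤ m) (hm2 : m ≤ n) :
    ∑ μ ∈ Finset.Icc 1 (2*n),
      (((-1:ℝ)^(μ+1) / (4*n*Real.sin ((2*(μ:ℝ)-1)*Real.pi/(2*n)/2)^2) : ℝ) : ℂ)
        * Complex.exp (I * (((2*(μ:ℝ)-1)*Real.pi/(2*n) : ℝ) : ℂ)) ^ m = I * m := by
  have hnc : ((n:ℂ)) ≠ 0 := by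
    exact_mod_cast (show ((n:ℝ)) ≠ 0 by positivity)
  have step1 : ∀ μ ∈ Finset.Icc 1 (2*n),
      (((-1:ℝ)^(μ+1) / (4*n*Real.sin ((2*(μ:ℝ)-1)*Real.pi/(2*n)/2)^2) : ℝ) : ℂ)
        * Complex.exp (I * (((2*(μ:ℝ)-1)*Real.pi/(2*n) : ℝ) : ℂ)) ^ m
      = (2*(n:ℂ))⁻¹ * ∑ m' ∈ Finset.Icc (1-(n:ℤ)) (n:ℤ),
          I * m' * Complex.exp (I * (((2*(μ:ℝ)-1)*Real.pi/(2*n) : ℝ) : ℂ)) ^ (m - m') := by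
    intro μ hμ
    rw [Finset.mem_Icc] at hμ
    rw [coeff_eq n μ hn hμ.1 hμ.2]
    rw [mul_assoc, Finset.sum_mul]
    congr 1
    apply Finset.sum_congr rfl
    intro m' _
    have hz0 : Complex.exp (I * (((2*(μ:ℝ)-1)*Real.pi/(2*n) : ℝ) : ℂ)) ≠ 0 :=
      Complex.exp_ne_zero _
    rw [sub_eq_add_neg m m', zpow_add₀ hz0]
    ring
  have hinner : ∑ m' ∈ Finset.Icc (1-(n:ℤ)) (n:ℤ), ∑ μ ∈ Finset.Icc 1 (2*n),
      I * m' * Complex.exp (I * (((2*(μ:ℝ)-1)*Real.pi/(2*n) : ℝ) : ℂ)) ^ (m - m')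
      = I * m * (2*n) := by
    by_cases hcase : m = -(n:ℤ)
    · subst hcase
      rw [Finset.sum_eq_single_of_mem (n:ℤ) (by rw [Finset.mem_Icc]; omega)]
      · have hval : ∀ μ ∈ Finset.Icc 1 (2*n),
            I * ((n:ℤ):ℂ) * Complex.exp (I * (((2*(μ:ℝ)-1)*Real.pi/(2*n) : ℝ) : ℂ)) ^ (-(n:ℤ) - (n:ℤ))
            = -(I * ((n:ℤ):ℂ)) := by
          intro μ hμ
          rw [Finset.mem_Icc] at hμ
          have h2n := exp2n n μ hn hμ.1 hμ.2
          have he : (-(n:ℤ) - (n:ℤ)) = -((2*n : ℕ) : ℤ) := by push_cast; ring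
          rw [he, zpow_neg, zpow_natCast, h2n]
          norm_num
        rw [Finset.sum_congr rfl hval]
        simp only [Finset.sum_const, Nat.card_Icc, nsmul_eq_mul]
        push_cast
        ring
      · intro m' hm' hne
        rw [Finset.mem_Icc] at hm'
        have horth := orth n hn (-(n:ℤ) - m') (by omega) (by omega) (by omega)
        calc ∑ μ ∈ Finset.Icc 1 (2*n), I * (m':ℂ) *
              Complex.exp (I * (((2*(μ:ℝ)-1)*Real.pi/(2*n) : ℝ) : ℂ)) ^ (-(n:ℤ) - m')
            = I * (m':ℂ) * ∑ μ ∈ Finset.Icc 1 (2*n),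
              Complex.exp (I * (((2*(μ:ℝ)-1)*Real.pi/(2*n) : ℝ) : ℂ)) ^ (-(n:ℤ) - m') := by
              rw [Finset.mul_sum]
          _ = 0 := by rw [horth]; ring
    · rw [Finset.sum_eq_single_of_mem m (by rw [Finset.mem_Icc]; omega)]
      · simp only [sub_self, zpow_zero, mul_one, Finset.sum_const, Nat.card_Icc, nsmul_eq_mul]
        push_cast
        ring
      · intro m' hm' hne
        rw [Finset.mem_Icc] at hm'
        have horth := orth n hn (m - m') (by omega) (by omega) (by omega)
        calc ∑ μ ∈ Finset.Icc 1 (2*n), I * (m':ℂ) *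
              Complex.exp (I * (((2*(μ:ℝ)-1)*Real.pi/(2*n) : ℝ) : ℂ)) ^ (m - m')
            = I * (m':ℂ) * ∑ μ ∈ Finset.Icc 1 (2*n),
              Complex.exp (I * (((2*(μ:ℝ)-1)*Real.pi/(2*n) : ℝ) : ℂ)) ^ (m - m') := by
              rw [Finset.mul_sum]
          _ = 0 := by rw [horth]; ring
  calc ∑ μ ∈ Finset.Icc 1 (2*n),
      (((-1:ℝ)^(μ+1) / (4*n*Real.sin ((2*(μ:ℝ)-1)*Real.pi/(2*n)/2)^2) : ℝ) : ℂ)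
        * Complex.exp (I * (((2*(μ:ℝ)-1)*Real.pi/(2*n) : ℝ) : ℂ)) ^ m
      = ∑ μ ∈ Finset.Icc 1 (2*n), (2*(n:ℂ))⁻¹ * ∑ m' ∈ Finset.Icc (1-(n:ℤ)) (n:ℤ),
          I * m' * Complex.exp (I * (((2*(μ:ℝ)-1)*Real.pi/(2*n) : ℝ) : ℂ)) ^ (m - m') :=
        Finset.sum_congr rfl step1
    _ = (2*(n:ℂ))⁻¹ * ∑ μ ∈ Finset.Icc 1 (2*n), ∑ m' ∈ Finset.Icc (1-(n:ℤ)) (n:ℤ),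
          I * m' * Complex.exp (I * (((2*(μ:ℝ)-1)*Real.pi/(2*n) : ℝ) : ℂ)) ^ (m - m') :=
        (Finset.mul_sum _ _ _).symm
    _ = (2*(n:ℂ))⁻¹ * ∑ m' ∈ Finset.Icc (1-(n:ℤ)) (n:ℤ), ∑ μ ∈ Finset.Icc 1 (2*n),
          I * m' * Complex.exp (I * (((2*(μ:ℝ)-1)*Real.pi/(2*n) : ℝ) : ℂ)) ^ (m - m') := by
        rw [Finset.sum_comm]
    _ = (2*(n:ℂ))⁻¹ * (I * m * (2*n)) := by rw [hinner]
    _ = I * m := by field_simp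

/-- The generalised parameter-shift rule (Eq. 9): the derivative of a real trigonometric
polynomial of degree at most `n` is an exact linear combination of `2n` shifted evaluations
at the equally spaced shifts `x_k = (2k−1)π/(2n)`. -/
theorem stmt5 (n : ℕ) (hn : 1 ≤ n) (c : ℤ → ℂ) (hc : ∀ k : ℤ, c (-k) = starRingEnd ℂ (c k))
    (f : ℝ → ℝ)
    (hf : ∀ x : ℝ, (f x : ℂ) = ∑ k ∈ Finset.Icc (-(n : ℤ)) (n : ℤ),
      c k * Complex.exp (Complex.I * (k : ℂ) * (x : ℂ))) :
    Differentiable ℝ f ∧ ∀ x : ℝ,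
      deriv f x = ∑ k ∈ Finset.Icc 1 (2 * n),
        f (x + (2 * (k : ℝ) - 1) * Real.pi / (2 * n)) * (-1 : ℝ) ^ (k + 1) /
          (4 * n * Real.sin ((2 * (k : ℝ) - 1) * Real.pi / (2 * n) / 2) ^ 2) := by
  set D : ℝ → ℂ := fun x => ∑ k ∈ Finset.Icc (-(n:ℤ)) (n:ℤ),
    c k * (Complex.I*(k:ℂ)) * Complex.exp (Complex.I * (k:ℂ) * (x:ℂ)) with hD
  have hder : ∀ x : ℝ, HasDerivAt f (D x).re x := by
    intro x
    have hg : HasDerivAt (fun y : ℝ => ∑ k ∈ Finset.Icc (-(n:ℤ)) (n:ℤ),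
        c k * Complex.exp (Complex.I * (k:ℂ) * (y:ℂ))) (D x) x := by
      apply HasDerivAt.fun_sum
      intro k _
      have h2 : HasDerivAt (fun w:ℂ => Complex.I*(k:ℂ)*w) (Complex.I*(k:ℂ)) ((x:ℝ):ℂ) := by
        simpa using (hasDerivAt_id ((x:ℝ):ℂ)).const_mul (Complex.I*(k:ℂ))
      have h4 := ((h2.cexp).const_mul (c k)).comp_ofReal
      convert h4 using 1
      · rfl
      ring
    have hre := (Complex.reCLM.hasFDerivAt).comp_hasDerivAt x hg
    have hfeq : f = fun y : ℝ => (∑ k ∈ Finset.Icc (-(n:ℤ)) (n:ℤ),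
        c k * Complex.exp (Complex.I * (k:ℂ) * (y:ℂ))).re := by
      funext y
      rw [← Complex.ofReal_re (f y), hf y]
    rw [hfeq]
    exact hre
  refine ⟨fun x => (hder x).differentiableAt, fun x => ?_⟩
  rw [(hder x).deriv]
  have hcx : ((∑ k ∈ Finset.Icc 1 (2 * n),
      f (x + (2 * (k : ℝ) - 1) * Real.pi / (2 * n)) * (-1 : ℝ) ^ (k + 1) /
        (4 * n * Real.sin ((2 * (k : ℝ) - 1) * Real.pi / (2 * n) / 2) ^ 2) : ℝ) : ℂ) = D x := by
    rw [Complex.ofReal_sum]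
    calc ∑ μ ∈ Finset.Icc 1 (2*n),
          ((f (x + (2 * (μ : ℝ) - 1) * Real.pi / (2 * n)) * (-1 : ℝ) ^ (μ + 1) /
            (4 * n * Real.sin ((2 * (μ : ℝ) - 1) * Real.pi / (2 * n) / 2) ^ 2) : ℝ) : ℂ)
        = ∑ μ ∈ Finset.Icc 1 (2*n), ((f (x + (2 * (μ : ℝ) - 1) * Real.pi / (2 * n)) : ℝ) : ℂ)
            * (((-1:ℝ)^(μ+1) / (4*n*Real.sin ((2*(μ:ℝ)-1)*Real.pi/(2*n)/2)^2) : ℝ) : ℂ) := by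
          apply Finset.sum_congr rfl
          intro μ _
          push_cast
          ring
      _ = ∑ μ ∈ Finset.Icc 1 (2*n), ∑ k ∈ Finset.Icc (-(n:ℤ)) (n:ℤ),
            (c k * Complex.exp (Complex.I * (k:ℂ) * (x:ℂ)))
              * ((((-1:ℝ)^(μ+1) / (4*n*Real.sin ((2*(μ:ℝ)-1)*Real.pi/(2*n)/2)^2) : ℝ) : ℂ)
                * Complex.exp (Complex.I * (((2*(μ:ℝ)-1)*Real.pi/(2*n) : ℝ) : ℂ)) ^ (k:ℤ)) := by
          apply Finset.sum_congr rfl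
          intro μ _
          rw [hf, Finset.sum_mul]
          apply Finset.sum_congr rfl
          intro k _
          have hsplit : Complex.exp (Complex.I * (k:ℂ) * ((x + (2*(μ:ℝ)-1)*Real.pi/(2*n) : ℝ):ℂ))
              = Complex.exp (Complex.I * (k:ℂ) * (x:ℂ))
                * Complex.exp (Complex.I * (((2*(μ:ℝ)-1)*Real.pi/(2*n) : ℝ) : ℂ)) ^ (k:ℤ) := by
            rw [Complex.ofReal_add, mul_add, Complex.exp_add, ← Complex.exp_int_mul]
            congr 2
            ring
          rw [hsplit]
          ring
      _ = ∑ k ∈ Finset.Icc (-(n:ℤ)) (n:ℤ),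
            (c k * Complex.exp (Complex.I * (k:ℂ) * (x:ℂ)))
              * ∑ μ ∈ Finset.Icc 1 (2*n),
                (((-1:ℝ)^(μ+1) / (4*n*Real.sin ((2*(μ:ℝ)-1)*Real.pi/(2*n)/2)^2) : ℝ) : ℂ)
                  * Complex.exp (Complex.I * (((2*(μ:ℝ)-1)*Real.pi/(2*n) : ℝ) : ℂ)) ^ (k:ℤ) := by
          rw [Finset.sum_comm]
          apply Finset.sum_congr rfl
          intro k _
          rw [Finset.mul_sum]
      _ = D x := by
          apply Finset.sum_congr rfl
          intro k hk
          rw [Finset.mem_Icc] at hk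
          rw [key_s5 n hn k hk.1 hk.2]
          ring
  rw [← hcx, Complex.ofReal_re]
end

section
/- Let n ≥ 1 and let m be an integer with |m| ≤ n. Then Σ_{k=1}^{2n} (−1)^{k+1} · e^{i m x_k} / (4n · sin²(x_k/2)) = i·m, where x_k = (2k−1)π/(2n). -/
open scoped BigOperators
open Complex Finset


lemma geom_key (n : ℕ) (hn : 1 ≤ n) (u : ℕ) :
    ∑ k ∈ Finset.Icc 1 (2*n),
        Complex.exp (Complex.I * (((2*(k:ℝ)-1) * Real.pi / (2*n) : ℝ) : ℂ)) ^ u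
      = if 2*n ∣ u then (2*n : ℂ) * (-1)^(u/(2*n)) else 0 := by
  set a : ℂ := Complex.exp (Complex.I * (Real.pi * u / (2*n))) with ha
  have hterm : ∀ k ∈ Finset.Icc 1 (2*n),
      Complex.exp (Complex.I * (((2*(k:ℝ)-1) * Real.pi / (2*n) : ℝ) : ℂ)) ^ u
        = a ^ (2*k-1) := by
    intro k hk
    have hk1 : 1 ≤ k := (Finset.mem_Icc.mp hk).1
    rw [ha, ← Complex.exp_nat_mul, ← Complex.exp_nat_mul]
    congr 1
    rw [Nat.cast_sub (by omega : 1 ≤ 2*k)]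
    push_cast
    field_simp
  rw [Finset.sum_congr rfl hterm, ← Finset.Ico_add_one_right_eq_Icc, Finset.sum_Ico_eq_sum_range]
  simp only [Nat.add_sub_cancel]
  have hre : ∀ i : ℕ, a ^ (2*(1+i)-1) = (a^2)^i * a := by
    intro i
    rw [← pow_mul, ← pow_succ]
    congr 1
    omega
  rw [Finset.sum_congr rfl (fun i _ => hre i), ← Finset.sum_mul]
  by_cases hdvd : 2*n ∣ u
  · obtain ⟨t, rfl⟩ := hdvd
    have ha1 : a = (-1)^t := by
      rw [ha]
      have : Complex.I * (Real.pi * (2*n*t : ℕ) / (2*n)) = t * (Real.pi * Complex.I) := by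
        push_cast
        have : (n:ℂ) ≠ 0 := Nat.cast_ne_zero.mpr (by omega)
        field_simp
      rw [this, Complex.exp_nat_mul, Complex.exp_pi_mul_I]
    have hq : (2*n*t)/(2*n) = t := Nat.mul_div_cancel_left t (by omega)
    rw [if_pos ⟨t, rfl⟩, hq, ha1]
    have h1 : ((-1:ℂ)^t)^2 = 1 := by
      rw [← pow_mul, mul_comm, pow_mul]
      norm_num
    rw [h1]
    simp [Finset.sum_const]
  · have ha2 : a^2 ≠ 1 := by
      intro h
      rw [ha, ← Complex.exp_nat_mul] at h
      rw [Complex.exp_eq_one_iff] at h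
      obtain ⟨z, hz⟩ := h
      have h2πI : (2*Real.pi*Complex.I : ℂ) ≠ 0 := by
        simp [Real.pi_ne_zero, Complex.I_ne_zero]
      have hn0 : (n:ℂ) ≠ 0 := Nat.cast_ne_zero.mpr (by omega)
      field_simp at hz
      have hu : (u:ℂ) * (2*Real.pi*Complex.I) = ((2*n*z : ℤ):ℂ) * (2*Real.pi*Complex.I) := by
        push_cast
        linear_combination ((Real.pi:ℂ) * Complex.I) * hz
      have hu2 : (u:ℤ) = 2*n*z := by exact_mod_cast mul_right_cancel₀ h2πI hu
      have hd : ((2*n:ℕ):ℤ) ∣ (u:ℤ) := ⟨z, by push_cast; exact hu2⟩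
      exact hdvd (Int.natCast_dvd_natCast.mp hd)
    rw [geom_sum_eq ha2, if_neg hdvd]
    have h4n : (a^2)^(2*n) = 1 := by
      rw [ha, ← pow_mul, ← Complex.exp_nat_mul]
      have hn0 : (n:ℂ) ≠ 0 := Nat.cast_ne_zero.mpr (by omega)
      have he : ((2*(2*n):ℕ) : ℂ) * (Complex.I * (Real.pi * u / (2*n))) = (u:ℕ) * (2*Real.pi*Complex.I) := by
        push_cast
        field_simp
      rw [he, Complex.exp_nat_mul, Complex.exp_two_pi_mul_I, one_pow]
    rw [h4n]
    simp


lemma tsum_lemma (n : ℕ) (hn : 1 ≤ n) (v : ℕ) (hv1 : 1 ≤ v) (hv2 : v ≤ 4*n) :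
    ∑ t ∈ Finset.range (2*n), (if 2*n ∣ (v+t) then (2*n:ℂ)*(-1)^((v+t)/(2*n)) else 0)
      = if v ≤ 2*n then -(2*n:ℂ) else (2*n:ℂ) := by
  have hbound : ∀ t < 2*n, ∀ c, v + t = 2*n*c → c = 1 ∨ c = 2 := by
    intro t ht c hc
    have hc0 : c ≠ 0 := by rintro rfl; omega
    have hc3 : c < 3 := by
      by_contra h
      push_neg at h
      have : 2*n*3 ≤ 2*n*c := Nat.mul_le_mul_left _ h
      linarith
    omega
  by_cases hv : v ≤ 2*n
  · rw [if_pos hv]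
    rw [Finset.sum_eq_single_of_mem (2*n - v) (Finset.mem_range.mpr (by omega))]
    · have h1 : v + (2*n - v) = 2*n := by omega
      rw [h1, if_pos (dvd_refl _), Nat.div_self (by omega : 0 < 2*n)]
      ring
    · intro t ht hne
      have ht' := Finset.mem_range.mp ht
      rw [if_neg]
      rintro ⟨c, hc⟩
      rcases hbound t ht' c hc with rfl | rfl <;> omega
  · rw [if_neg hv]
    rw [Finset.sum_eq_single_of_mem (4*n - v) (Finset.mem_range.mpr (by omega))]
    · have h1 : v + (4*n - v) = 2*n*2 := by omega
      rw [h1, if_pos ⟨2, rfl⟩, Nat.mul_div_cancel_left 2 (by omega : 0 < 2*n)]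
      norm_num
    · intro t ht hne
      have ht' := Finset.mem_range.mp ht
      rw [if_neg]
      rintro ⟨c, hc⟩
      rcases hbound t ht' c hc with rfl | rfl <;> omega

lemma ssum (n j : ℕ) (hn : 1 ≤ n) (hj1 : 1 ≤ j) (hj2 : j ≤ 2*n+1) :
    ∑ s ∈ Finset.range (2*n), (if j + s ≤ 2*n then -(2*n:ℂ) else (2*n:ℂ))
      = ((2*n+1-j : ℕ):ℂ) * (-(2*n:ℂ)) + ((2*n - (2*n+1-j) : ℕ):ℂ) * (2*n:ℂ) := by
  rw [Finset.sum_ite]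
  have h1 : Finset.filter (fun s => j + s ≤ 2*n) (Finset.range (2*n)) = Finset.range (2*n+1-j) := by
    ext s
    simp only [Finset.mem_filter, Finset.mem_range]
    omega
  have h2 : Finset.filter (fun s => ¬ j + s ≤ 2*n) (Finset.range (2*n)) = Finset.Ico (2*n+1-j) (2*n) := by
    ext s
    simp only [Finset.mem_filter, Finset.mem_range, Finset.mem_Ico]
    omega
  rw [h1, h2, Finset.sum_const, Finset.sum_const, Finset.card_range, Nat.card_Ico]
  simp [nsmul_eq_mul]


lemma term_eq (n : ℕ) (hn : 1 ≤ n) (m : ℤ) (j : ℕ) (hj : (j:ℤ) = m + n + 1)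
    (k : ℕ) (hk1 : 1 ≤ k) (hk2 : k ≤ 2*n) :
    (-1:ℂ)^(k+1) * Complex.exp (Complex.I * (m:ℂ) * (((2*(k:ℝ)-1)*Real.pi/(2*n) : ℝ):ℂ)) /
        ((4*n*Real.sin ((2*(k:ℝ)-1)*Real.pi/(2*n)/2)^2 : ℝ):ℂ)
      = Complex.I/(4*n) * (Complex.exp (Complex.I * (((2*(k:ℝ)-1)*Real.pi/(2*n) : ℝ):ℂ))^j *
          (∑ s ∈ Finset.range (2*n), Complex.exp (Complex.I * (((2*(k:ℝ)-1)*Real.pi/(2*n) : ℝ):ℂ))^s)^2) := by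
  have hn0 : (n:ℂ) ≠ 0 := Nat.cast_ne_zero.mpr (by omega)
  have hnR : (n:ℝ) ≠ 0 := Nat.cast_ne_zero.mpr (by omega)
  set x : ℝ := (2*(k:ℝ)-1)*Real.pi/(2*n) with hx
  set w : ℂ := Complex.exp (Complex.I * (x:ℂ)) with hw
  set G : ℂ := ∑ s ∈ Finset.range (2*n), w^s with hG
  have hw0 : w ≠ 0 := Complex.exp_ne_zero _
  have hw2n : w^(2*n) = -1 := by
    rw [hw, ← Complex.exp_nat_mul]
    have he : ((2*n:ℕ):ℂ) * (Complex.I * (x:ℂ)) = ((2*k-1 : ℕ):ℂ) * (Real.pi * Complex.I) := by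
      rw [hx, Nat.cast_sub (by omega : 1 ≤ 2*k)]
      push_cast
      field_simp
    rw [he, Complex.exp_nat_mul, Complex.exp_pi_mul_I]
    exact Odd.neg_one_pow ⟨k-1, by omega⟩
  have hGw : G * (w - 1) = -2 := by
    rw [hG, geom_sum_mul, hw2n]; ring
  have hG2 : G^2 * (w-1)^2 = 4 := by
    rw [← mul_pow, hGw]; norm_num
  have hwne1 : w - 1 ≠ 0 := by
    intro h
    rw [h, mul_zero] at hGw
    norm_num at hGw
  set h : ℂ := Complex.exp (Complex.I * ((x/2 : ℝ):ℂ)) with hh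
  have hh0 : h ≠ 0 := Complex.exp_ne_zero _
  have hhsq : h^2 = w := by
    rw [hh, hw, ← Complex.exp_nat_mul]
    congr 1
    push_cast
    ring
  have hsin : ((Real.sin (x/2) : ℝ) : ℂ) = (h⁻¹ - h) * Complex.I / 2 := by
    rw [Complex.ofReal_sin]
    show ((Complex.exp (-((x/2:ℝ):ℂ)*Complex.I) - Complex.exp (((x/2:ℝ):ℂ)*Complex.I)) * Complex.I)/2 = _
    have e1 : -(((x/2:ℝ)):ℂ)*Complex.I = -(Complex.I*((x/2:ℝ):ℂ)) := by ring
    have e2 : (((x/2:ℝ)):ℂ)*Complex.I = Complex.I*((x/2:ℝ):ℂ) := by ring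
    rw [e1, e2, Complex.exp_neg, ← hh]
  have hsin2 : ((Real.sin (x/2) : ℝ) : ℂ)^2 = -((h⁻¹ - h)^2)/4 := by
    rw [hsin, div_pow, mul_pow, Complex.I_sq]
    ring
  have hcast : ((4*n*Real.sin (x/2)^2 : ℝ):ℂ) = 4*(n:ℂ)*((Real.sin (x/2) : ℝ):ℂ)^2 := by
    push_cast
    ring
  have hD : ((4*n*Real.sin (x/2)^2 : ℝ):ℂ) * w = -(n:ℂ) * (w-1)^2 := by
    rw [hcast, hsin2, ← hhsq]
    field_simp
    ring
  have hD0 : ((4*n*Real.sin (x/2)^2 : ℝ):ℂ) ≠ 0 := by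
    intro h0
    rw [h0, zero_mul] at hD
    exact (mul_ne_zero hn0 (pow_ne_zero 2 hwne1)) (by linear_combination hD)
  have hwn : w^n = Complex.I^(2*k-1) := by
    rw [hw, ← Complex.exp_nat_mul]
    have he : ((n:ℕ):ℂ) * (Complex.I * (x:ℂ)) = ((2*k-1:ℕ):ℂ) * (((Real.pi/2 : ℝ):ℂ) * Complex.I) := by
      rw [hx, Nat.cast_sub (by omega : 1 ≤ 2*k)]
      push_cast
      field_simp
    rw [he, Complex.exp_nat_mul]
    congr 1
    rw [Complex.exp_mul_I, ← Complex.ofReal_cos, ← Complex.ofReal_sin,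
      Real.cos_pi_div_two, Real.sin_pi_div_two]
    simp
  have hexpm : Complex.exp (Complex.I * (m:ℂ) * (x:ℂ)) = w^m := by
    rw [hw, ← Complex.exp_int_mul]
    congr 1
    ring
  have h2 : Complex.I^(2*k-1) = (-1:ℂ)^(k-1) * Complex.I := by
    have e : 2*k-1 = 2*(k-1)+1 := by omega
    rw [e, pow_succ, pow_mul, Complex.I_sq]
  have hpow : w^j = w^n * w^m * w := by
    have hj' : (j:ℤ) = (n:ℤ) + m + 1 := by omega
    calc w^j = w^((j:ℤ)) := (zpow_natCast w j).symm
      _ = w^((n:ℤ) + m + 1) := by rw [hj']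
      _ = w^((n:ℤ)) * w^m * w^(1:ℤ) := by rw [zpow_add₀ hw0, zpow_add₀ hw0]
      _ = w^n * w^m * w := by rw [zpow_natCast, zpow_one]
  have hkey : (-1:ℂ)^(k+1) * w^m * w = -Complex.I * w^j := by
    have hkk : (-1:ℂ)^(k+1) = (-1:ℂ)^(k-1) := by
      rw [show k+1 = (k-1)+2 by omega, pow_add]
      norm_num
    rw [hpow, hwn, h2, hkk]
    linear_combination ((-1:ℂ)^(k-1) * w^m * w) * Complex.I_mul_I
  rw [div_eq_iff hD0, hexpm]
  apply mul_right_cancel₀ hw0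
  rw [hkey, mul_assoc (Complex.I/(4*(n:ℂ)) * (w^j * G^2)), hD]
  field_simp
  linear_combination hG2

/-- The kernel identity underlying the generalised parameter-shift rule (Eq. 9): the
shift-rule coefficients applied to the Fourier mode `e^{imx}` with `|m| ≤ n` produce
exactly the derivative factor `i·m`. -/
theorem stmt6 (n : ℕ) (hn : 1 ≤ n) (m : ℤ) (hm : |m| ≤ (n : ℤ)) :
    ∑ k ∈ Finset.Icc 1 (2 * n),
        (-1 : ℂ) ^ (k + 1) *
          Complex.exp (Complex.I * (m : ℂ) * (((2 * (k : ℝ) - 1) * Real.pi / (2 * n) : ℝ) : ℂ)) /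
          ((4 * n * Real.sin ((2 * (k : ℝ) - 1) * Real.pi / (2 * n) / 2) ^ 2 : ℝ) : ℂ)
      = Complex.I * (m : ℂ) := by
  rw [abs_le] at hm
  obtain ⟨j, hj, hj1, hj2⟩ : ∃ j : ℕ, (j:ℤ) = m + n + 1 ∧ 1 ≤ j ∧ j ≤ 2*n+1 :=
    ⟨(m + n + 1).toNat, by omega, by omega, by omega⟩
  have hn0 : (n:ℂ) ≠ 0 := Nat.cast_ne_zero.mpr (by omega)
  rw [Finset.sum_congr rfl
    (fun k hk => term_eq n hn m j hj k (Finset.mem_Icc.mp hk).1 (Finset.mem_Icc.mp hk).2),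
    ← Finset.mul_sum]
  have hexpand : ∀ k ∈ Finset.Icc 1 (2*n),
      Complex.exp (Complex.I * (((2*(k:ℝ)-1)*Real.pi/(2*n) : ℝ):ℂ))^j *
          (∑ s ∈ Finset.range (2*n), Complex.exp (Complex.I * (((2*(k:ℝ)-1)*Real.pi/(2*n) : ℝ):ℂ))^s)^2
        = ∑ s ∈ Finset.range (2*n), ∑ t ∈ Finset.range (2*n),
            Complex.exp (Complex.I * (((2*(k:ℝ)-1)*Real.pi/(2*n) : ℝ):ℂ))^(j+s+t) := by
    intro k _
    rw [sq, Finset.sum_mul_sum, Finset.mul_sum]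
    refine Finset.sum_congr rfl fun s _ => ?_
    rw [Finset.mul_sum]
    refine Finset.sum_congr rfl fun t _ => ?_
    rw [pow_add, pow_add]
    ring
  rw [Finset.sum_congr rfl hexpand, Finset.sum_comm]
  have hs : ∀ s ∈ Finset.range (2*n),
      (∑ k ∈ Finset.Icc 1 (2*n), ∑ t ∈ Finset.range (2*n),
          Complex.exp (Complex.I * (((2*(k:ℝ)-1)*Real.pi/(2*n) : ℝ):ℂ))^(j+s+t))
        = if j + s ≤ 2*n then -(2*n:ℂ) else (2*n:ℂ) := by
    intro s hsm
    have hslt := Finset.mem_range.mp hsm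
    rw [Finset.sum_comm]
    calc ∑ t ∈ Finset.range (2*n), ∑ k ∈ Finset.Icc 1 (2*n),
            Complex.exp (Complex.I * (((2*(k:ℝ)-1)*Real.pi/(2*n) : ℝ):ℂ))^(j+s+t)
        = ∑ t ∈ Finset.range (2*n),
            (if 2*n ∣ (j+s+t) then (2*n:ℂ)*(-1)^((j+s+t)/(2*n)) else 0) :=
          Finset.sum_congr rfl (fun t _ => geom_key n hn (j+s+t))
      _ = if j + s ≤ 2*n then -(2*n:ℂ) else (2*n:ℂ) :=
          tsum_lemma n hn (j+s) (by omega) (by omega)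
  rw [Finset.sum_congr rfl hs, ssum n j hn hj1 hj2]
  have hc1 : ((2*n+1-j : ℕ):ℂ) = (n:ℂ) - (m:ℂ) := by
    have h1 : ((2*n+1-j : ℕ):ℤ) = (n:ℤ) - m := by omega
    calc ((2*n+1-j : ℕ):ℂ) = (((2*n+1-j : ℕ):ℤ):ℂ) := by push_cast; ring
      _ = (n:ℂ) - (m:ℂ) := by rw [h1]; push_cast; ring
  have hc2 : ((2*n - (2*n+1-j) : ℕ):ℂ) = (n:ℂ) + (m:ℂ) := by
    have h1 : ((2*n - (2*n+1-j) : ℕ):ℤ) = (n:ℤ) + m := by omega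
    calc ((2*n - (2*n+1-j) : ℕ):ℂ) = (((2*n - (2*n+1-j) : ℕ):ℤ):ℂ) := by push_cast; ring
      _ = (n:ℂ) + (m:ℂ) := by rw [h1]; push_cast; ring
  rw [hc1, hc2]
  field_simp
  ring
end

section
/- Let A, B, φ ∈ ℝ and define f : ℝ → ℝ by f(x) = A·sin(x − φ) + B. Set X = f(π/2) − f(−π/2), Y = 2·f(0) − f(π/2) − f(−π/2), and x₀ = −π/2 − atan2(Y, X), where atan2(Y, X) denotes the argument in (−π, π] of the complex number X + iY (with the convention atan2(0,0) = 0). Then f(x₀) = B − |A|, and f(x₀) ≤ f(x) for all x ∈ ℝ; i.e. x₀ is a global minimum of f. -/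
/-- Correctness of the Rotosolve update rule (Eq. 14 / Algorithm 1): for
`f(x) = A sin(x − φ) + B`, the point `x₀ = −π/2 − atan2(Y, X)` computed from the samples
`f(0), f(π/2), f(−π/2)` is a global minimiser with value `B − |A|`.
Here `atan2(Y, X)` is the argument in `(−π, π]` of the complex number `X + iY`. -/
theorem stmt8 (A B φ : ℝ) (f : ℝ → ℝ) (hf : ∀ x, f x = A * Real.sin (x - φ) + B)
    (X Y x₀ : ℝ)
    (hX : X = f (Real.pi / 2) - f (-(Real.pi / 2)))
    (hY : Y = 2 * f 0 - f (Real.pi / 2) - f (-(Real.pi / 2)))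
    (hx₀ : x₀ = -(Real.pi / 2) - Complex.arg (X + Y * Complex.I)) :
    f x₀ = B - |A| ∧ ∀ x : ℝ, f x₀ ≤ f x := by
  have hmin : ∀ x : ℝ, B - |A| ≤ f x := by
    intro x
    rw [hf]
    have h1 : |A * Real.sin (x - φ)| ≤ |A| := by
      rw [abs_mul]
      calc |A| * |Real.sin (x - φ)| ≤ |A| * 1 :=
            mul_le_mul_of_nonneg_left (Real.abs_sin_le_one _) (abs_nonneg A)
        _ = |A| := mul_one _
    have h2 := neg_abs_le (A * Real.sin (x - φ))
    linarith
  have hs1 : Real.sin (Real.pi / 2 - φ) = Real.cos φ := Real.sin_pi_div_two_sub φ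
  have hs2 : Real.sin (-(Real.pi / 2) - φ) = -Real.cos φ := by
    have h : -(Real.pi / 2) - φ = -(φ + Real.pi / 2) := by ring
    rw [h, Real.sin_neg, Real.sin_add_pi_div_two]
  have hs0 : Real.sin (0 - φ) = -Real.sin φ := by rw [zero_sub, Real.sin_neg]
  have hXv : X = 2 * A * Real.cos φ := by
    rw [hX, hf, hf, hs1, hs2]; ring
  have hYv : Y = -(2 * A * Real.sin φ) := by
    rw [hY, hf, hf, hf, hs0, hs1, hs2]; ring
  have hval : f x₀ = B - |A| := by
    rcases eq_or_ne A 0 with hA | hA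
    · subst hA; rw [hf]; simp
    · set z : ℂ := (X : ℂ) + (Y : ℂ) * Complex.I with hz
      have hre : z.re = X := by simp [hz]
      have him : z.im = Y := by simp [hz]
      have habs : ‖z‖ = 2 * |A| := by
        have : ‖z‖ = Real.sqrt (X ^ 2 + Y ^ 2) := by
          rw [Complex.norm_def, Complex.normSq_apply, hre, him]; ring_nf
        rw [this, hXv, hYv]
        have hXY : (2 * A * Real.cos φ) ^ 2 + (-(2 * A * Real.sin φ)) ^ 2
            = (2 * |A|) ^ 2 := by
          have := Real.sin_sq_add_cos_sq φ
          have hA2 : |A| ^ 2 = A ^ 2 := sq_abs A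
          nlinarith
        rw [hXY, Real.sqrt_sq (by positivity)]
      have hz0 : z ≠ 0 := by
        intro h
        rw [h, norm_zero] at habs
        have : |A| = 0 := by linarith
        exact hA (abs_eq_zero.mp this)
      have hcos : Real.cos z.arg = X / (2 * |A|) := by
        rw [Complex.cos_arg hz0, hre, habs]
      have hsin : Real.sin z.arg = Y / (2 * |A|) := by
        rw [Complex.sin_arg, him, habs]
      have hApos : (0:ℝ) < 2 * |A| := by positivity
      have hkey : Real.sin (x₀ - φ) = -(A / |A|) := by
        rw [hx₀]
        have h : -(Real.pi / 2) - z.arg - φ = -((z.arg + φ) + Real.pi / 2) := by ring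
        rw [h, Real.sin_neg, Real.sin_add_pi_div_two, Real.cos_add, hcos, hsin,
          hXv, hYv]
        have h3 := Real.sin_sq_add_cos_sq φ
        field_simp
        linear_combination (-1 : ℝ) * h3
      rw [hf, hkey]
      have hA2 : A * (A / |A|) = |A| := by
        rw [mul_div_assoc']
        rw [show A * A = |A| * |A| by rw [← abs_mul_abs_self]]
        field_simp
      rw [mul_neg, hA2]; ring
  exact ⟨hval, fun x => hval ▸ hmin x⟩
end

section
/- Let n ≥ 1 and let f : ℝ → ℝ be given by f(x) = Σ_{k=−n}^{n} c_k e^{i k x} with complex coefficients satisfying c_{−k} = conj(c_k) for all k, and assume c_k ≠ 0 for some k ≠ 0. Then the set {x ∈ [0, 2π) : f has a local minimum at x} is finite and has at most n elements. -/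
open scoped BigOperators

open Set

/-- Transport a local min by a period. -/
lemma aux13_min_shift {T : ℝ} {f : ℝ → ℝ} (hper : ∀ x, f (x + T) = f x)
    {a : ℝ} (h : IsLocalMin f a) : IsLocalMin f (a + T) := by
  have hmap : Filter.map (· + T) (nhds a) = nhds (a + T) :=
    (Homeomorph.addRight T).map_nhds_eq a
  unfold IsLocalMin IsMinFilter at *
  rw [← hmap, Filter.eventually_map]
  filter_upwards [h] with y hy
  rw [hper y, hper a]; exact hy

/-- Near a local min of a function whose derivative is not locally zero,
there are strictly larger values on the right. -/
lemma aux13_strict_right {f D : ℝ → ℝ} (hfd : ∀ x, HasDerivAt f (D x) x)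
    (hdense : ∀ a b : ℝ, a < b → ∃ x ∈ Set.Ioo a b, D x ≠ 0)
    {a : ℝ} (h : IsLocalMin f a) {ε : ℝ} (hε : 0 < ε) :
    ∃ y ∈ Set.Ioo a (a + ε), f a < f y := by
  obtain ⟨δ, hδ, hmin⟩ := Metric.eventually_nhds_iff.mp h
  by_contra hcon
  push_neg at hcon
  set ε' := min ε δ with hε'
  have hε'0 : 0 < ε' := lt_min hε hδ
  have hconst : ∀ y ∈ Set.Ioo a (a + ε'), f y = f a := by
    intro y hy
    have h1 : f a ≤ f y := by
      apply hmin
      rw [Real.dist_eq, abs_lt]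
      constructor <;> nlinarith [hy.1, hy.2, min_le_right ε δ]
    have h2 : f y ≤ f a := hcon y ⟨hy.1, lt_of_lt_of_le hy.2 (by simp [hε'])⟩
    exact le_antisymm h2 h1
  obtain ⟨x, hx, hDx⟩ := hdense a (a + ε') (by linarith)
  apply hDx
  have : HasDerivAt f 0 x := by
    apply (hasDerivAt_const x (f a)).congr_of_eventuallyEq
    filter_upwards [Ioo_mem_nhds hx.1 hx.2] with y hy
    exact hconst y hy
  exact (hfd x).unique this

lemma aux13_strict_left {f D : ℝ → ℝ} (hfd : ∀ x, HasDerivAt f (D x) x)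
    (hdense : ∀ a b : ℝ, a < b → ∃ x ∈ Set.Ioo a b, D x ≠ 0)
    {a : ℝ} (h : IsLocalMin f a) {ε : ℝ} (hε : 0 < ε) :
    ∃ y ∈ Set.Ioo (a - ε) a, f a < f y := by
  have hfd' : ∀ x, HasDerivAt (fun y => f (-y)) (-(D (-x))) x := by
    intro x
    have := (hfd (-x)).comp x (hasDerivAt_neg x)
    simp only [mul_neg, mul_one] at this
    exact this
  have hdense' : ∀ a b : ℝ, a < b → ∃ x ∈ Set.Ioo a b, -(D (-x)) ≠ 0 := by
    intro a b hab
    obtain ⟨x, hx, hDx⟩ := hdense (-b) (-a) (by linarith)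
    exact ⟨-x, ⟨by linarith [hx.2], by linarith [hx.1]⟩, by simpa using hDx⟩
  have h' : IsLocalMin (fun y => f (-y)) (-a) := by
    have : Filter.Tendsto (fun y : ℝ => -y) (nhds (-a)) (nhds a) := by
      simpa using (continuous_neg.tendsto (-a))
    exact IsMinFilter.comp_tendsto (by simp; exact h) this
  obtain ⟨y, hy, hfy⟩ := aux13_strict_right hfd' hdense' h' hε
  refine ⟨-y, ⟨by linarith [hy.2], by linarith [hy.1]⟩, by simpa using hfy⟩

/-- Between two local minima there is a critical point. -/
lemma aux13_between {f D : ℝ → ℝ} (hfd : ∀ x, HasDerivAt f (D x) x)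
    (hdense : ∀ a b : ℝ, a < b → ∃ x ∈ Set.Ioo a b, D x ≠ 0)
    {a b : ℝ} (hab : a < b) (ha : IsLocalMin f a) (hb : IsLocalMin f b) :
    ∃ z ∈ Set.Ioo a b, D z = 0 := by
  have hcont : Continuous f := by
    rw [continuous_iff_continuousAt]; exact fun x => (hfd x).continuousAt
  obtain ⟨u, hu, hfu⟩ := aux13_strict_right hfd hdense ha (show (0:ℝ) < b - a by linarith)
  obtain ⟨v, hv, hfv⟩ := aux13_strict_left hfd hdense hb (show (0:ℝ) < b - a by linarith)
  obtain ⟨z, hz, hmax⟩ := isCompact_Icc.exists_isMaxOn (Set.nonempty_Icc.mpr hab.le)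
    (hcont.continuousOn (s := Set.Icc a b))
  have hu' : u ∈ Set.Icc a b := ⟨hu.1.le, by linarith [hu.2]⟩
  have hv' : v ∈ Set.Icc a b := ⟨by linarith [hv.1], hv.2.le⟩
  have hza : z ≠ a := by
    intro h; subst h
    exact absurd (hmax hu') (by simpa using not_le.mpr hfu)
  have hzb : z ≠ b := by
    intro h; subst h
    exact absurd (hmax hv') (by simpa using not_le.mpr hfv)
  have hzo : z ∈ Set.Ioo a b := ⟨lt_of_le_of_ne hz.1 (Ne.symm hza), lt_of_le_of_ne hz.2 hzb⟩
  refine ⟨z, hzo, ?_⟩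
  have : IsLocalMax f z := hmax.isLocalMax (Icc_mem_nhds hzo.1 hzo.2)
  exact this.hasDerivAt_eq_zero (hfd z)

/-- Main combinatorial lemma: twice the number of local minima in one period is at most
the number of critical points in one period. -/
lemma aux13_main {T : ℝ} (hT : 0 < T) {f D : ℝ → ℝ}
    (hfd : ∀ x, HasDerivAt f (D x) x)
    (hper : ∀ x, f (x + T) = f x)
    (hdense : ∀ a b : ℝ, a < b → ∃ x ∈ Set.Ioo a b, D x ≠ 0)
    (hZ : {x ∈ Set.Ico (0:ℝ) T | D x = 0}.Finite) :
    {x ∈ Set.Ico (0:ℝ) T | IsLocalMin f x}.Finite ∧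
    2 * {x ∈ Set.Ico (0:ℝ) T | IsLocalMin f x}.ncard
      ≤ {x ∈ Set.Ico (0:ℝ) T | D x = 0}.ncard := by
  have hDper : ∀ x, D (x + T) = D x := by
    intro x
    have h1 : HasDerivAt (fun y : ℝ => f (y + T)) (D (x + T) * 1) x :=
      (hfd (x + T)).comp x ((hasDerivAt_id x).add_const T)
    have h2 : (fun y : ℝ => f (y + T)) = f := funext hper
    rw [h2, mul_one] at h1
    exact (h1.unique (hfd x))
  set Z := {x ∈ Set.Ico (0:ℝ) T | D x = 0} with hZdef
  set M := {x ∈ Set.Ico (0:ℝ) T | IsLocalMin f x} with hMdef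
  have hMZ : M ⊆ Z := by
    rintro x ⟨hx1, hx2⟩
    exact ⟨hx1, hx2.hasDerivAt_eq_zero (hfd x)⟩
  have hMfin : M.Finite := hZ.subset hMZ
  refine ⟨hMfin, ?_⟩
  rcases M.eq_empty_or_nonempty with hMe | hMne
  · simp [hMe]
  obtain ⟨m₀, hm₀M, hm₀min⟩ := Set.exists_min_image M id hMfin hMne
  simp only [id] at hm₀min
  have key : ∀ x : ℝ, ∃ w : ℝ, x ∈ M → (w ∈ Z ∧ w ∉ M ∧
      ((x < w ∧ ∀ y ∈ M, x < y → w < y) ∨ (w < m₀ ∧ ∀ y ∈ M, y ≤ x))) := by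
    intro x
    by_cases hx : x ∈ M
    swap
    · exact ⟨0, fun h => absurd h hx⟩
    have hxIco : x ∈ Set.Ico (0:ℝ) T := hx.1
    have hxmin : IsLocalMin f x := hx.2
    by_cases hS : ∃ y ∈ M, x < y
    · -- there is a next local min
      have hSfin : {y ∈ M | x < y}.Finite := hMfin.subset (Set.sep_subset _ _)
      obtain ⟨b, hbS, hbmin⟩ := Set.exists_min_image _ id hSfin hS
      simp only [id] at hbmin
      obtain ⟨hbM, hxb⟩ := hbS
      obtain ⟨z, hz, hDz⟩ := aux13_between hfd hdense hxb hxmin hbM.2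
      refine ⟨z, fun _ => ⟨⟨⟨le_trans hxIco.1 hz.1.le, lt_trans hz.2 hbM.1.2⟩, hDz⟩, ?_, ?_⟩⟩
      · intro hzM
        exact absurd (hbmin z ⟨hzM, hz.1⟩) (not_le.mpr hz.2)
      · exact Or.inl ⟨hz.1, fun y hyM hxy => lt_of_lt_of_le hz.2 (hbmin y ⟨hyM, hxy⟩)⟩
    · -- x is the largest local min; wrap around
      push_neg at hS
      have hb : IsLocalMin f (m₀ + T) := aux13_min_shift hper hm₀M.2
      have hxb : x < m₀ + T := lt_of_lt_of_le hxIco.2 (le_add_of_nonneg_left hm₀M.1.1)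
      obtain ⟨z, hz, hDz⟩ := aux13_between hfd hdense hxb hxmin hb
      by_cases hzT : z < T
      · refine ⟨z, fun _ => ⟨⟨⟨le_trans hxIco.1 hz.1.le, hzT⟩, hDz⟩, ?_, ?_⟩⟩
        · intro hzM
          exact absurd (hS z hzM) (not_le.mpr hz.1)
        · exact Or.inl ⟨hz.1, fun y hyM hxy => absurd (hS y hyM) (not_le.mpr hxy)⟩
      · push_neg at hzT
        refine ⟨z - T, fun _ => ⟨⟨⟨by linarith, ?_⟩, ?_⟩, ?_, ?_⟩⟩
        · have : z - T < m₀ := by linarith [hz.2]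
          exact lt_trans this hm₀M.1.2
        · have h3 := hDper (z - T)
          rw [show z - T + T = z from by ring] at h3
          rw [← h3]; exact hDz
        · intro hM
          exact absurd (hm₀min _ hM) (not_le.mpr (by linarith [hz.2]))
        · exact Or.inr ⟨by linarith [hz.2], hS⟩
  choose r hr using key
  have main : ∀ x ∈ M, ∀ x' ∈ M, x < x' → r x ≠ r x' := by
    intro x hx x' hx' hlt
    obtain ⟨_, _, hP⟩ := hr x hx
    obtain ⟨_, _, hP'⟩ := hr x' hx'
    have hP1 : x < r x ∧ ∀ y ∈ M, x < y → r x < y := by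
      rcases hP with h | h
      · exact h
      · exact absurd (h.2 x' hx') (not_le.mpr hlt)
    have hrx : r x < x' := hP1.2 x' hx' hlt
    rcases hP' with h | h
    · exact ne_of_lt (lt_trans hrx h.1)
    · have hx2 : r x' < x := lt_of_lt_of_le h.1 (hm₀min x hx)
      exact (ne_of_lt (lt_trans hx2 hP1.1)).symm
  have hinj : Set.InjOn r M := by
    intro x hx x' hx' hrr
    by_contra hne
    rcases lt_or_gt_of_ne hne with h | h
    · exact main x hx x' hx' h hrr
    · exact main x' hx' x hx h hrr.symm
  have himg : r '' M ⊆ Z \ M := by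
    rintro _ ⟨x, hx, rfl⟩
    obtain ⟨h1, h2, _⟩ := hr x hx
    exact ⟨h1, h2⟩
  have hsub : (M ∪ r '' M) ⊆ Z :=
    Set.union_subset hMZ (himg.trans Set.diff_subset)
  have hdisj : Disjoint M (r '' M) := by
    rw [Set.disjoint_right]
    rintro a ⟨x, hx, rfl⟩
    exact (hr x hx).2.1
  have hcard : (M ∪ r '' M).ncard = M.ncard + (r '' M).ncard :=
    Set.ncard_union_eq hdisj hMfin (hMfin.image r)
  have himgcard : (r '' M).ncard = M.ncard := Set.ncard_image_of_injOn hinj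
  have hle := Set.ncard_le_ncard hsub hZ
  omega


lemma aux13_exp_per (k : ℤ) (x : ℝ) :
    Complex.exp (Complex.I * (k:ℂ) * ((x:ℝ) + 2 * Real.pi : ℝ)) =
      Complex.exp (Complex.I * (k:ℂ) * (x:ℂ)) := by
  have h : (Complex.I * (k:ℂ) * (((x:ℝ) + 2 * Real.pi : ℝ) : ℂ)) =
      Complex.I * (k:ℂ) * (x:ℂ) + (k:ℂ) * (2 * (Real.pi:ℂ) * Complex.I) := by
    push_cast; ring
  rw [h, Complex.exp_add, Complex.exp_int_mul_two_pi_mul_I, mul_one]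

lemma aux13_exp_inj {x y : ℝ} (hxy : |x - y| < 2 * Real.pi)
    (h : Complex.exp (Complex.I * (x:ℂ)) = Complex.exp (Complex.I * (y:ℂ))) : x = y := by
  rw [Complex.exp_eq_exp_iff_exists_int] at h
  obtain ⟨m, hm⟩ := h
  have h2 : (x:ℂ) = (y:ℂ) + (m:ℂ) * (2 * (Real.pi:ℂ)) := by
    linear_combination (-Complex.I) * hm + ((x:ℂ) - y - 2*(Real.pi:ℂ)*m) * Complex.I_sq
  have h3 : x = y + m * (2 * Real.pi) := by exact_mod_cast h2
  have hm0 : m = 0 := by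
    rcases lt_trichotomy m 0 with h' | h' | h'
    · exfalso
      have : (m:ℝ) ≤ -1 := by exact_mod_cast (show m ≤ -1 by omega)
      rw [abs_lt] at hxy
      nlinarith [Real.pi_pos]
    · exact h'
    · exfalso
      have : (1:ℝ) ≤ (m:ℝ) := by exact_mod_cast h'
      rw [abs_lt] at hxy
      nlinarith [Real.pi_pos]
  rw [hm0] at h3
  simpa using h3

lemma aux13_deriv (n : ℕ) (c : ℤ → ℂ) (x : ℝ) :
    HasDerivAt (fun y : ℝ => ∑ k ∈ Finset.Icc (-(n:ℤ)) n, c k * Complex.exp (Complex.I * k * y))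
      (∑ k ∈ Finset.Icc (-(n:ℤ)) n, c k * (Complex.I * k) * Complex.exp (Complex.I * k * x)) x := by
  apply HasDerivAt.fun_sum
  intro k _
  have h : HasDerivAt (fun z : ℂ => c k * Complex.exp (Complex.I * k * z))
      (c k * (Complex.I * k) * Complex.exp (Complex.I * k * x)) (x:ℂ) := by
    have h1 : HasDerivAt (fun z : ℂ => Complex.I * k * z) (Complex.I * k) (x:ℂ) := by
      simpa using (hasDerivAt_id (x:ℂ)).const_mul (Complex.I * (k:ℂ))
    have h2 := (h1.cexp).const_mul (c k)
    refine h2.congr_deriv ?_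
    ring
  exact h.comp_ofReal

lemma aux13_real (n : ℕ) (c : ℤ → ℂ) (hc : ∀ k : ℤ, c (-k) = starRingEnd ℂ (c k)) (x : ℝ) :
    (starRingEnd ℂ) (∑ k ∈ Finset.Icc (-(n:ℤ)) n, c k * (Complex.I * k) * Complex.exp (Complex.I * k * x))
    = ∑ k ∈ Finset.Icc (-(n:ℤ)) n, c k * (Complex.I * k) * Complex.exp (Complex.I * k * x) := by
  rw [map_sum]
  refine Finset.sum_equiv (Equiv.neg ℤ) (fun k => by simp; omega) (fun k hk => ?_)
  simp only [Equiv.neg_apply]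
  rw [map_mul, map_mul, ← Complex.exp_conj, ← hc k]
  congr 1
  · congr 1
    simp [Complex.conj_I]
  · congr 1
    simp [map_mul, Complex.conj_I, Complex.conj_ofReal]

lemma aux13_eval (n : ℕ) (c : ℤ → ℂ) (x : ℝ) :
    Polynomial.eval (Complex.exp (Complex.I * x))
      (∑ k ∈ Finset.Icc (-(n:ℤ)) n, Polynomial.C (Complex.I * k * c k) * Polynomial.X ^ (k + n).toNat)
    = Complex.exp (Complex.I * n * x) *
      ∑ k ∈ Finset.Icc (-(n:ℤ)) n, c k * (Complex.I * k) * Complex.exp (Complex.I * k * x) := by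
  rw [Polynomial.eval_finset_sum, Finset.mul_sum]
  apply Finset.sum_congr rfl
  intro k hk
  simp only [Polynomial.eval_mul, Polynomial.eval_C, Polynomial.eval_pow, Polynomial.eval_X]
  have hk' : (0:ℤ) ≤ k + n := by
    simp only [Finset.mem_Icc] at hk; omega
  have hcast : ((k + n).toNat : ℂ) = ((k:ℂ) + n) := by
    have := Int.toNat_of_nonneg hk'
    exact_mod_cast congrArg (Int.cast : ℤ → ℂ) this
  have hpow : Complex.exp (Complex.I * x) ^ ((k + n).toNat) = Complex.exp (Complex.I * ((k:ℂ) + n) * x) := by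
    rw [← Complex.exp_nat_mul, hcast]
    congr 1
    ring
  have h2 : Complex.exp (Complex.I * ((k:ℂ) + n) * x)
      = Complex.exp (Complex.I * k * x) * Complex.exp (Complex.I * n * x) := by
    rw [← Complex.exp_add]; congr 1; ring
  rw [hpow, h2]; ring

lemma aux13_Pne (n : ℕ) (c : ℤ → ℂ) (k₀ : ℤ) (hk₀ : k₀ ∈ Finset.Icc (-(n:ℤ)) n)
    (h0 : k₀ ≠ 0) (hc0 : c k₀ ≠ 0) :
    (∑ k ∈ Finset.Icc (-(n:ℤ)) n, Polynomial.C (Complex.I * k * c k) * Polynomial.X ^ (k + n).toNat) ≠ 0 := by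
  intro hP
  have hcoeff := congrArg (fun p => Polynomial.coeff p ((k₀ + n).toNat)) hP
  simp only [Polynomial.finset_sum_coeff, Polynomial.coeff_C_mul, Polynomial.coeff_X_pow,
    Polynomial.coeff_zero] at hcoeff
  rw [Finset.sum_eq_single k₀] at hcoeff
  · simp only [if_pos rfl, mul_one] at hcoeff
    have : (k₀:ℂ) ≠ 0 := by exact_mod_cast h0
    simp [Complex.I_ne_zero, this, hc0] at hcoeff
  · intro k hk hne
    rw [if_neg, mul_zero]
    intro h
    simp only [Finset.mem_Icc] at hk hk₀
    omega
  · intro h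
    exact absurd hk₀ h

lemma aux13_deg (n : ℕ) (c : ℤ → ℂ) :
    (∑ k ∈ Finset.Icc (-(n:ℤ)) n, Polynomial.C (Complex.I * k * c k) * Polynomial.X ^ (k + n).toNat).natDegree ≤ 2 * n := by
  apply Polynomial.natDegree_sum_le_of_forall_le
  intro k hk
  apply le_trans (Polynomial.natDegree_C_mul_le _ _)
  rw [Polynomial.natDegree_X_pow]
  simp only [Finset.mem_Icc] at hk
  omega

theorem aux13_stmt (n : ℕ) (hn : 1 ≤ n) (c : ℤ → ℂ)
    (hc : ∀ k : ℤ, c (-k) = starRingEnd ℂ (c k)) (f : ℝ → ℝ)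
    (hf : ∀ x : ℝ, (f x : ℂ) = ∑ k ∈ Finset.Icc (-(n : ℤ)) (n : ℤ),
      c k * Complex.exp (Complex.I * (k : ℂ) * (x : ℂ)))
    (hne : ∃ k ∈ Finset.Icc (-(n : ℤ)) (n : ℤ), k ≠ 0 ∧ c k ≠ 0) :
    ({x ∈ Set.Ico (0 : ℝ) (2 * Real.pi) | IsLocalMin f x}.Finite ∧
      {x ∈ Set.Ico (0 : ℝ) (2 * Real.pi) | IsLocalMin f x}.ncard ≤ n) := by
  classical
  set g' : ℝ → ℂ := fun x => ∑ k ∈ Finset.Icc (-(n:ℤ)) n, c k * (Complex.I * k) * Complex.exp (Complex.I * k * x) with hg'def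
  set D : ℝ → ℝ := fun x => (g' x).re with hDdef
  set P : Polynomial ℂ := ∑ k ∈ Finset.Icc (-(n:ℤ)) n, Polynomial.C (Complex.I * k * c k) * Polynomial.X ^ (k + n).toNat with hPdef
  have hfre : (fun x : ℝ => (∑ k ∈ Finset.Icc (-(n:ℤ)) n, c k * Complex.exp (Complex.I * k * x)).re) = f := by
    funext x
    rw [← hf x, Complex.ofReal_re]
  have hfd : ∀ x : ℝ, HasDerivAt f (D x) x := by
    intro x
    have h1 := aux13_deriv n c x
    have h2 := Complex.reCLM.hasFDerivAt.comp_hasDerivAt x h1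
    simp only [Function.comp_def] at h2
    rw [show (fun y : ℝ => Complex.reCLM (∑ k ∈ Finset.Icc (-(n:ℤ)) n, c k * Complex.exp (Complex.I * k * y))) = f from hfre ▸ rfl] at h2
    exact h2
  have hreal : ∀ x : ℝ, ((D x : ℝ) : ℂ) = g' x := by
    intro x
    exact Complex.conj_eq_iff_re.mp (aux13_real n c hc x)
  have hPne : P ≠ 0 := by
    obtain ⟨k₀, hk₀, h0, hc0⟩ := hne
    exact aux13_Pne n c k₀ hk₀ h0 hc0
  have hDzero : ∀ x : ℝ, D x = 0 ↔ P.IsRoot (Complex.exp (Complex.I * x)) := by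
    intro x
    rw [Polynomial.IsRoot, hPdef, aux13_eval n c x]
    constructor
    · intro h
      have hg0 : g' x = 0 := by rw [← hreal x, h]; simp
      show Complex.exp _ * g' x = 0
      rw [hg0, mul_zero]
    · intro h
      rcases mul_eq_zero.mp h with h' | h'
      · exact absurd h' (Complex.exp_ne_zero _)
      · have : ((D x : ℝ) : ℂ) = 0 := by rw [hreal x]; exact h'
        exact_mod_cast this
  have hinj : ∀ x ∈ Set.Ico (0:ℝ) (2*Real.pi), ∀ y ∈ Set.Ico (0:ℝ) (2*Real.pi),
      Complex.exp (Complex.I * x) = Complex.exp (Complex.I * y) → x = y := by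
    intro x hx y hy h
    apply aux13_exp_inj _ h
    rw [abs_lt]
    constructor <;> [linarith [hx.1, hy.2]; linarith [hx.2, hy.1]]
  have hrootfin : {z : ℂ | P.IsRoot z}.Finite := Polynomial.finite_setOf_isRoot hPne
  set Z := {x ∈ Set.Ico (0:ℝ) (2*Real.pi) | D x = 0} with hZdef
  have hZsub : (fun x : ℝ => Complex.exp (Complex.I * x)) '' Z ⊆ {z : ℂ | P.IsRoot z} := by
    rintro _ ⟨x, hx, rfl⟩
    exact (hDzero x).mp hx.2
  have hZinj : Set.InjOn (fun x : ℝ => Complex.exp (Complex.I * x)) Z := by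
    intro x hx y hy h
    exact hinj x hx.1 y hy.1 h
  have hZfin : Z.Finite := Set.Finite.of_finite_image (hrootfin.subset hZsub) hZinj
  have hZcard : Z.ncard ≤ 2 * n := by
    have h1 : Z.ncard = ((fun x : ℝ => Complex.exp (Complex.I * x)) '' Z).ncard :=
      (Set.ncard_image_of_injOn hZinj).symm
    have h2 : {z : ℂ | P.IsRoot z} = ↑P.roots.toFinset := by
      ext z
      simp [Multiset.mem_toFinset, Polynomial.mem_roots, hPne]
    have h3 : ((fun x : ℝ => Complex.exp (Complex.I * x)) '' Z).ncard ≤ {z : ℂ | P.IsRoot z}.ncard :=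
      Set.ncard_le_ncard hZsub hrootfin
    have h4 : {z : ℂ | P.IsRoot z}.ncard ≤ 2 * n := by
      rw [h2, Set.ncard_coe_finset]
      calc P.roots.toFinset.card ≤ Multiset.card P.roots := Multiset.toFinset_card_le _
        _ ≤ P.natDegree := Polynomial.card_roots' P
        _ ≤ 2 * n := aux13_deg n c
    omega
  have hdense : ∀ a b : ℝ, a < b → ∃ x ∈ Set.Ioo a b, D x ≠ 0 := by
    intro a b hab
    by_contra hcon
    push_neg at hcon
    set b' := min b (a + 1) with hb'
    have hab' : a < b' := lt_min hab (by linarith)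
    have hIsub : Set.Ioo a b' ⊆ Set.Ioo a b := Set.Ioo_subset_Ioo le_rfl (min_le_left _ _)
    have hinj' : Set.InjOn (fun x : ℝ => Complex.exp (Complex.I * x)) (Set.Ioo a b') := by
      intro x hx y hy h
      apply aux13_exp_inj _ h
      rw [abs_lt]
      have hb'le : b' ≤ a + 1 := min_le_right _ _
      have := Real.pi_gt_three
      constructor <;> nlinarith [hx.1, hx.2, hy.1, hy.2]
    have himg : (fun x : ℝ => Complex.exp (Complex.I * x)) '' (Set.Ioo a b') ⊆ {z : ℂ | P.IsRoot z} := by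
      rintro _ ⟨x, hx, rfl⟩
      exact (hDzero x).mp (hcon x (hIsub hx))
    have hinf : (Set.Ioo a b').Infinite := Set.Ioo_infinite hab'
    exact (hrootfin.subset himg).not_infinite (hinf.image hinj')
  have hper : ∀ x : ℝ, f (x + 2 * Real.pi) = f x := by
    intro x
    have h1 := hf (x + 2 * Real.pi)
    have h2 := hf x
    apply Complex.ofReal_injective
    rw [h1, h2]
    apply Finset.sum_congr rfl
    intro k _
    rw [aux13_exp_per k x]
  obtain ⟨hfin, hcount⟩ := aux13_main Real.two_pi_pos hfd hper hdense hZfin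
  have hZeq : {x ∈ Set.Ico (0:ℝ) (2*Real.pi) | D x = 0} = Z := rfl
  rw [hZeq] at hcount
  exact ⟨hfin, by omega⟩

/-- A nonconstant real trigonometric polynomial of degree at most `n` has at most `n`
local minima in `[0, 2π)` (Appendix B.2). -/
theorem stmt13 (n : ℕ) (hn : 1 ≤ n) (c : ℤ → ℂ)
    (hc : ∀ k : ℤ, c (-k) = starRingEnd ℂ (c k)) (f : ℝ → ℝ)
    (hf : ∀ x : ℝ, (f x : ℂ) = ∑ k ∈ Finset.Icc (-(n : ℤ)) (n : ℤ),
      c k * Complex.exp (Complex.I * (k : ℂ) * (x : ℂ)))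
    (hne : ∃ k ∈ Finset.Icc (-(n : ℤ)) (n : ℤ), k ≠ 0 ∧ c k ≠ 0) :
    ({x ∈ Set.Ico (0 : ℝ) (2 * Real.pi) | IsLocalMin f x}.Finite ∧
      {x ∈ Set.Ico (0 : ℝ) (2 * Real.pi) | IsLocalMin f x}.ncard ≤ n) := by
  exact aux13_stmt n hn c hc f hf hne
end
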